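/- (Kneser's conjecture / Lovász's theorem) For n ≥ 2k ≥ 4, the chromatic number of the Kneser graph on the k-subsets of [n], where two subsets are adjacent iff disjoint, equals n - 2k + 2. -/

import Mathlib

set_option maxHeartbeats 1600000
attribute [local instance] Classical.propDecidable

open Finset

namespace KG


def altB : Bool → List ℤ → Bool
  | _, [] => true
  | b, a :: t => (decide (0 < a) == b) && altB (!b) t

@[simp] lemma altB_nil (b : Bool) : altB b [] = true := rfl
lemma altB_cons (b : Bool) (a : ℤ) (t : List ℤ) :
    altB b (a :: t) = ((decide (0 < a) == b) && altB (!b) t) := rfl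

lemma altB_erase_parity (l : List ℤ) (b : Bool) :
    (((List.range l.length).map
        (fun i => if altB b (l.eraseIdx i) then 1 else 0)).sum) % 2
      = ((if altB b l then 1 else 0) + (if altB (!b) l then 1 else 0)) % 2 := by
  induction l generalizing b with
  | nil => simp
  | cons a t ih =>
    rw [List.length_cons, List.range_succ_eq_map]
    simp only [List.map_cons, List.map_map, List.sum_cons]
    have h2 : ∀ g : List ℤ → Bool, (List.map
        ((fun i => if g ((a :: t).eraseIdx i) then (1:ℕ) else 0) ∘ Nat.succ)
        (List.range t.length)).sum
        = ((List.range t.length).map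
        (fun i => if g (a :: t.eraseIdx i) then 1 else 0)).sum := by
      intro g; congr 1
    rw [h2]
    have he0 : (a :: t).eraseIdx 0 = t := rfl
    by_cases hab : (decide (0 < a) == b) = true
    · have hcons : ∀ u, altB b (a :: u) = altB (!b) u := by
        intro u; rw [altB_cons, hab, Bool.true_and]
      have hd : (decide (0 < a) == !b) = false := by
        revert hab; cases b <;> cases (decide (0 < a)) <;> simp
      have hcons' : ∀ u, altB (!b) (a :: u) = false := by
        intro u; rw [altB_cons, hd, Bool.false_and]
      simp only [hcons, hcons', he0]
      have ihb := ih (!b)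
      rw [Bool.not_not] at ihb
      simp only [Bool.false_eq_true, if_false, add_zero]
      omega
    · have hab' : (decide (0 < a) == b) = false := by
        revert hab; cases (decide (0 < a) == b) <;> simp
      have hcons : ∀ u, altB b (a :: u) = false := by
        intro u; rw [altB_cons, hab', Bool.false_and]
      have hd : (decide (0 < a) == !b) = true := by
        revert hab'; cases b <;> cases (decide (0 < a)) <;> simp
      have hcons' : ∀ u, altB (!b) (a :: u) = altB b u := by
        intro u; rw [altB_cons, hd, Bool.true_and, Bool.not_not]
      simp only [hcons, hcons', he0]
      simp


def srtd (l : List ℤ) : Prop := l.Chain' (fun a b => |a| < |b|)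

def AltP (M : Multiset ℤ) : Prop := ∃ l : List ℤ, (l : Multiset ℤ) = M ∧ srtd l ∧ altB true l
def AltN (M : Multiset ℤ) : Prop := ∃ l : List ℤ, (l : Multiset ℤ) = M ∧ srtd l ∧ altB false l

lemma srtd_pairwise {l : List ℤ} (h : srtd l) : l.Pairwise (fun a b => |a| < |b|) := by
  haveI : IsTrans ℤ (fun a b : ℤ => |a| < |b|) := ⟨fun a b c h1 h2 => h1.trans h2⟩
  exact List.isChain_iff_pairwise.1 h

lemma srtd_of_sublist {l l' : List ℤ} (h : l'.Sublist l) (hs : srtd l) : srtd l' :=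
  ((srtd_pairwise hs).sublist h).isChain

lemma srtd_unique {l₁ l₂ : List ℤ} (h : l₁.Perm l₂) (s₁ : srtd l₁) (s₂ : srtd l₂) :
    l₁ = l₂ := by
  haveI : IsAntisymm ℤ (fun a b : ℤ => |a| < |b|) :=
    ⟨fun a b h1 h2 => absurd (h1.trans h2) (lt_irrefl _)⟩
  exact List.Perm.eq_of_pairwise' (srtd_pairwise s₁) (srtd_pairwise s₂) h

lemma AltP_nodup_abs {M : Multiset ℤ} (h : AltP M) : (M.map (fun a => |a|)).Nodup := by
  obtain ⟨l, rfl, hs, -⟩ := h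
  rw [Multiset.map_coe, Multiset.coe_nodup]
  exact List.Pairwise.map _ (fun a b h => ne_of_lt h) (srtd_pairwise hs)
lemma AltN_nodup_abs {M : Multiset ℤ} (h : AltN M) : (M.map (fun a => |a|)).Nodup := by
  obtain ⟨l, rfl, hs, -⟩ := h
  rw [Multiset.map_coe, Multiset.coe_nodup]
  exact List.Pairwise.map _ (fun a b h => ne_of_lt h) (srtd_pairwise hs)

lemma map_erase_mem {α β : Type*} [DecidableEq α] [DecidableEq β] (f : α → β) (M : Multiset α)
    {a : α} (ha : a ∈ M) : (M.erase a).map f = (M.map f).erase (f a) := by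
  conv_rhs => rw [← Multiset.cons_erase ha]
  rw [Multiset.map_cons, Multiset.erase_cons_head]

lemma sum_erase_pos (l : List ℤ) :
    ∀ g : Multiset ℤ → ℕ,
      (l.map (fun a => g ((↑l : Multiset ℤ).erase a))).sum
      = ((List.range l.length).map (fun i => g ((↑(l.eraseIdx i) : Multiset ℤ)))).sum := by
  induction l with
  | nil => intro g; simp
  | cons a t ih =>
    intro g
    rw [List.length_cons, List.range_succ_eq_map]
    simp only [List.map_cons, List.sum_cons, List.map_map]
    have h0 : ((a :: t : List ℤ) : Multiset ℤ) = a ::ₘ (↑t : Multiset ℤ) :=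
      (Multiset.cons_coe a t).symm
    have hhead : ((↑(a :: t) : Multiset ℤ)).erase a = ↑t := by
      rw [h0, Multiset.erase_cons_head]
    have htail : (t.map (fun x => g ((↑(a :: t) : Multiset ℤ).erase x))).sum
        = (t.map (fun x => (fun N => g (a ::ₘ N)) ((↑t : Multiset ℤ).erase x))).sum := by
      congr 1
      refine List.map_congr_left (fun x hx => ?_)
      show g ((↑(a :: t) : Multiset ℤ).erase x) = g (a ::ₘ (↑t : Multiset ℤ).erase x)
      rw [h0]
      by_cases hxa : x = a
      · subst hxa
        rw [Multiset.erase_cons_head, Multiset.cons_erase (Multiset.mem_coe.2 hx)]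
      · rw [Multiset.erase_cons_tail _ (fun h => hxa h.symm)]
    rw [hhead, htail, ih (fun N => g (a ::ₘ N))]
    rfl

lemma AltP_coe_iff {l : List ℤ} (hs : srtd l) : AltP (↑l) ↔ altB true l := by
  constructor
  · rintro ⟨l', hl', hs', ha'⟩
    rwa [srtd_unique (Multiset.coe_eq_coe.1 hl') hs' hs] at ha'
  · intro h; exact ⟨l, rfl, hs, h⟩
lemma AltN_coe_iff {l : List ℤ} (hs : srtd l) : AltN (↑l) ↔ altB false l := by
  constructor
  · rintro ⟨l', hl', hs', ha'⟩
    rwa [srtd_unique (Multiset.coe_eq_coe.1 hl') hs' hs] at ha'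
  · intro h; exact ⟨l, rfl, hs, h⟩

/-- The key counting lemma at the multiset level. -/
lemma L1M (M : Multiset ℤ) (h0 : ∀ a ∈ M, a ≠ 0) (hc : ∀ a ∈ M, -a ∉ M) :
    (M.map (fun a => if AltP (M.erase a) then (1:ℕ) else 0)).sum % 2
      = ((if AltP M then 1 else 0) + (if AltN M then 1 else 0)) % 2 := by
  by_cases hnd : (M.map (fun a => |a|)).Nodup
  · -- sorted list representative
    obtain ⟨l, hlM, hsorted⟩ : ∃ l : List ℤ, (↑l : Multiset ℤ) = M ∧
        l.Pairwise (fun a b : ℤ => |a| ≤ |b|) := by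
      refine ⟨M.toList.mergeSort (fun a b => decide (|a| ≤ |b|)), ?_, ?_⟩
      · rw [Multiset.coe_eq_coe.2 (List.mergeSort_perm M.toList _), Multiset.coe_toList]
      · have := List.pairwise_mergeSort (le := fun a b : ℤ => decide (|a| ≤ |b|))
          (fun a b c hab hbc => by
            simp only [decide_eq_true_eq] at *; exact hab.trans hbc)
          (fun a b => by
            rcases le_total |a| |b| with h | h <;> simp [h])
          M.toList
        exact this.imp (fun h => by simpa using h)
    subst hlM
    have habsnd : (l.map (fun a => |a|)).Nodup := by
      rw [Multiset.map_coe, Multiset.coe_nodup] at hnd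
      exact hnd
    have hs : srtd l := by
      have h2 : l.Pairwise (fun a b : ℤ => |a| ≠ |b|) := List.pairwise_map.1 habsnd
      exact ((hsorted.and h2).imp (fun h =>
        lt_of_le_of_ne h.1 h.2)).isChain
    rw [Multiset.map_coe, Multiset.sum_coe,
      sum_erase_pos l (fun N => if AltP N then 1 else 0)]
    have hpt : ∀ i, (if AltP ((↑(l.eraseIdx i) : Multiset ℤ)) then (1:ℕ) else 0)
        = (if altB true (l.eraseIdx i) then 1 else 0) := by
      intro i
      have hsi : srtd (l.eraseIdx i) := srtd_of_sublist (List.eraseIdx_sublist l i) hs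
      rw [if_congr (AltP_coe_iff hsi) rfl rfl]
    simp only [hpt]
    rw [altB_erase_parity l true, if_congr (AltP_coe_iff hs) rfl rfl,
      if_congr (AltN_coe_iff hs) rfl rfl]
    rfl
  · -- duplicate absolute value: everything is even/zero
    have hAP : ¬ AltP M := fun h => hnd (AltP_nodup_abs h)
    have hAN : ¬ AltN M := fun h => hnd (AltN_nodup_abs h)
    rw [if_neg hAP, if_neg hAN]
    rw [Finset.sum_multiset_map_count]
    rw [Finset.sum_nat_mod]
    have hterm : ∀ a ∈ M.toFinset,
        (M.count a • (if AltP (M.erase a) then (1:ℕ) else 0)) % 2 = 0 := by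
      intro a haf
      have haM : a ∈ M := Multiset.mem_toFinset.1 haf
      by_cases hA : AltP (M.erase a)
      · -- count must be even (in fact 2)
        rw [if_pos hA, smul_eq_mul, mul_one]
        have hnd2 : ((M.erase a).map (fun x => |x|)).Nodup := AltP_nodup_abs hA
        rw [map_erase_mem _ _ haM] at hnd2
        -- counts in (M.map abs)
        have hcnt : ∀ x ∈ M, (M.map (fun y => |y|)).count |x| = M.count x := by
          intro x hxM
          rw [Multiset.count_map]
          have : M.filter (fun y => |x| = |y|) = M.filter (fun y => y = x) := by
            apply Multiset.filter_congr
            intro y hyM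
            constructor
            · intro h
              rcases abs_eq_abs.1 h.symm with h' | h'
              · exact h'
              · exfalso; exact hc x hxM (h' ▸ hyM)
            · intro h; rw [h]
          rw [this]
          rw [Multiset.count, Multiset.countP_eq_card_filter]
          congr 1
          apply Multiset.filter_congr
          intro y _
          exact ⟨fun h => h.symm, fun h => h.symm⟩
        -- M.map abs not nodup: some witness with count ≥ 2
        obtain ⟨b, hb⟩ : ∃ b, 2 ≤ (M.map (fun y => |y|)).count b := by
          by_contra hno
          push_neg at hno
          exact hnd (Multiset.nodup_iff_count_le_one.2 (fun b => by
            have := hno b; omega))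
        have hbmem : b ∈ M.map (fun y => |y|) :=
          Multiset.count_pos.1 (by omega)
        obtain ⟨x, hxM, rfl⟩ := Multiset.mem_map.1 hbmem
        have hxa : |x| = |a| := by
          by_contra hne
          have := Multiset.nodup_iff_count_le_one.1 hnd2 |x|
          rw [Multiset.count_erase_of_ne hne] at this
          omega
        have h2le : 2 ≤ M.count a := by
          have e2 := hcnt a haM
          rw [hxa] at hb
          omega
        have hle2 : M.count a ≤ 2 := by
          have := Multiset.nodup_iff_count_le_one.1 hnd2 |a|
          rw [Multiset.count_erase_self] at this
          rw [← hcnt a haM] at *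
          omega
        have : M.count a = 2 := le_antisymm hle2 h2le
        rw [this]
      · rw [if_neg hA]; simp
    rw [Finset.sum_congr rfl hterm]
    simp



variable {n : ℕ}

abbrev SV (n : ℕ) := Fin n → SignType

/-- partial order on sign vectors: `y` extends `x` -/
def sle (x y : SV n) : Prop := ∀ i, x i ≠ 0 → y i = x i

def supp (x : SV n) : Finset (Fin n) := Finset.univ.filter (fun i => x i ≠ 0)

@[simp] lemma mem_supp {x : SV n} {i : Fin n} : i ∈ supp x ↔ x i ≠ 0 := by
  simp [supp]

lemma sle_refl (x : SV n) : sle x x := fun i _ => rfl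

lemma sle_trans {x y z : SV n} (h1 : sle x y) (h2 : sle y z) : sle x z := by
  intro i hi
  rw [h2 i (by rw [h1 i hi]; exact hi), h1 i hi]

lemma supp_mono {x y : SV n} (h : sle x y) : supp x ⊆ supp y := by
  intro i hi
  rw [mem_supp] at *
  rw [h i hi]; exact hi

lemma eq_of_sle_of_supp_subset {x y : SV n} (h : sle x y) (hs : supp y ⊆ supp x) :
    x = y := by
  funext i
  by_cases hi : x i = 0
  · by_cases hyi : y i = 0
    · rw [hi, hyi]
    · exact absurd (mem_supp.1 (hs (mem_supp.2 hyi))) (by simp [hi])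
  · exact (h i hi).symm

lemma supp_nonempty {x : SV n} (hx : x ≠ 0) : (supp x).Nonempty := by
  by_contra h
  apply hx
  funext i
  have := Finset.not_nonempty_iff_eq_empty.1 h
  by_contra hxi
  have : i ∈ supp x := mem_supp.2 hxi
  simp_all

@[simp] lemma neg_apply (x : SV n) (i : Fin n) : (-x) i = -(x i) := rfl

lemma sgnneg_eq_zero {s : SignType} : -s = 0 ↔ s = 0 := by
  cases s <;> simp <;> decide

@[simp] lemma supp_neg (x : SV n) : supp (-x) = supp x := by
  ext i; simp [supp, sgnneg_eq_zero]

lemma neg_ne_zero {x : SV n} (hx : x ≠ 0) : -x ≠ 0 := by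
  intro h
  apply hx
  funext i
  have : (-x) i = 0 := by rw [h]; rfl
  rw [neg_apply, sgnneg_eq_zero] at this
  exact this

lemma sle_neg {x y : SV n} (h : sle x y) : sle (-x) (-y) := by
  intro i hi
  have : x i ≠ 0 := fun h0 => hi (by rw [neg_apply, h0]; rfl)
  rw [neg_apply, neg_apply, h i this]

/-- a `good chain`: finite set of pairwise comparable nonzero sign vectors -/
def gchain (c : Finset (SV n)) : Prop :=
  (∀ x ∈ c, x ≠ 0) ∧ (∀ x ∈ c, ∀ y ∈ c, sle x y ∨ sle y x)

/-- bounded support: all indices below `j` -/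
def bnd (j : ℕ) (c : Finset (SV n)) : Prop := ∀ x ∈ c, ∀ i : Fin n, x i ≠ 0 → (i : ℕ) < j

lemma gchain_mono {c d : Finset (SV n)} (h : d ⊆ c) (hc : gchain c) : gchain d :=
  ⟨fun x hx => hc.1 x (h hx), fun x hx y hy => hc.2 x (h hx) y (h hy)⟩

lemma bnd_mono {j : ℕ} {c d : Finset (SV n)} (h : d ⊆ c) (hc : bnd j c) : bnd j d :=
  fun x hx => hc x (h hx)

/-- comparability is decided by support cardinality in a chain -/
lemma sle_of_card_le {c : Finset (SV n)} (hc : gchain c) {x y : SV n}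
    (hx : x ∈ c) (hy : y ∈ c) (h : (supp x).card ≤ (supp y).card) : sle x y := by
  rcases hc.2 x hx y hy with h1 | h1
  · exact h1
  · have hsub : supp y ⊆ supp x := supp_mono h1
    have : supp y = supp x := Finset.eq_of_subset_of_card_le hsub h
    have hyx : y = x := eq_of_sle_of_supp_subset h1 (by rw [← this])
    subst hyx
    exact sle_refl _

lemma card_supp_injOn {c : Finset (SV n)} (hc : gchain c) :
    Set.InjOn (fun x => (supp x).card) (↑c : Set (SV n)) := by
  intro x hx y hy hxy
  simp only at hxy
  have h1 : sle x y := sle_of_card_le hc hx hy hxy.le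
  exact eq_of_sle_of_supp_subset h1
    (by rw [Finset.eq_of_subset_of_card_le (supp_mono h1) hxy.ge])

def filterLT (j : ℕ) : Finset (Fin n) := Finset.univ.filter (fun i => (i : ℕ) < j)

lemma card_filterLT {j : ℕ} (hj : j ≤ n) : (filterLT j : Finset (Fin n)).card = j := by
  classical
  have : (filterLT j : Finset (Fin n)) = Finset.image (Fin.castLE hj) Finset.univ := by
    ext i
    simp only [filterLT, Finset.mem_filter, Finset.mem_univ, true_and, Finset.mem_image]
    constructor
    · intro hi
      exact ⟨⟨(i : ℕ), hi⟩, by ext; rfl⟩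
    · rintro ⟨k, rfl⟩
      exact k.2
  rw [this, Finset.card_image_of_injective _ (Fin.castLE_injective hj), Finset.card_univ,
    Fintype.card_fin]

lemma supp_subset_filterLT {j : ℕ} {c : Finset (SV n)} (hb : bnd j c) {x : SV n}
    (hx : x ∈ c) : supp x ⊆ filterLT j := by
  intro i hi
  simp only [filterLT, Finset.mem_filter, Finset.mem_univ, true_and]
  exact hb x hx i (mem_supp.1 hi)

/-- main structural fact: a `j`-chain bounded by `j` has support sizes exactly `1..j`. -/
lemma sizes_eq_Icc {j : ℕ} (hj : j ≤ n) {c : Finset (SV n)} (hc : gchain c)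
    (hcard : c.card = j) (hb : bnd j c) :
    c.image (fun x => (supp x).card) = Finset.Icc 1 j := by
  apply Finset.eq_of_subset_of_card_le
  · intro s hs
    obtain ⟨x, hx, rfl⟩ := Finset.mem_image.1 hs
    rw [Finset.mem_Icc]
    constructor
    · exact Finset.card_pos.2 (supp_nonempty (hc.1 x hx))
    · calc (supp x).card ≤ (filterLT j : Finset (Fin n)).card :=
            Finset.card_le_card (supp_subset_filterLT hb hx)
        _ = j := card_filterLT hj
  · rw [Nat.card_Icc]
    rw [Finset.card_image_of_injOn (card_supp_injOn hc), hcard]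
    omega

-- new material
@[simp] lemma zero_apply (i : Fin n) : (0 : SV n) i = 0 := rfl

lemma supp_zero : supp (0 : SV n) = ∅ := by
  ext i; simp [supp]

lemma sle_zero (x : SV n) : sle 0 x := fun i hi => absurd rfl hi

lemma ne_zero_of_supp {x : SV n} {i : Fin n} (hi : x i ≠ 0) : x ≠ 0 :=
  fun h => hi (by rw [h]; rfl)

/-- THE extension-counting lemma. -/
lemma EXT {j : ℕ} (hj1 : 1 ≤ j) (hjn : j ≤ n) (p : Fin n) (hp : (p : ℕ) = j - 1)
    (D : Finset (SV n)) (hD : gchain D) (hcard : D.card = j - 1) (hb : bnd j D)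
    (hH : ∀ x ∈ D, x p ≠ SignType.neg) :
    (Finset.univ.filter (fun y : SV n => y ∉ D ∧ y ≠ 0 ∧
        (∀ i : Fin n, y i ≠ 0 → (i : ℕ) < j) ∧ y p ≠ SignType.neg ∧
        gchain (insert y D))).card
      = if ∀ x ∈ D, x p = 0 then 1 else 2 := by
  classical
  set szf : SV n → ℕ := fun x => (supp x).card with hszf
  have hpj : (p : ℕ) < j := by omega
  -- image of sizes
  have hIccD : D.image szf ⊆ Finset.Icc 1 j := by
    intro s hs
    obtain ⟨x, hx, rfl⟩ := Finset.mem_image.1 hs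
    rw [Finset.mem_Icc]
    exact ⟨Finset.card_pos.2 (supp_nonempty (hD.1 x hx)),
      le_trans (Finset.card_le_card (supp_subset_filterLT hb hx)) (card_filterLT hjn).le⟩
  have hcardim : (D.image szf).card = j - 1 := by
    rw [Finset.card_image_of_injOn (card_supp_injOn hD), hcard]
  obtain ⟨s, hs⟩ : ∃ s, Finset.Icc 1 j \ D.image szf = {s} := by
    apply Finset.card_eq_one.1
    rw [Finset.card_sdiff_of_subset hIccD, Nat.card_Icc, hcardim]
    omega
  have hsIcc : s ∈ Finset.Icc 1 j := by
    have : s ∈ Finset.Icc 1 j \ D.image szf := by rw [hs]; exact Finset.mem_singleton_self s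
    exact (Finset.mem_sdiff.1 this).1
  have hsnot : s ∉ D.image szf := by
    have : s ∈ Finset.Icc 1 j \ D.image szf := by rw [hs]; exact Finset.mem_singleton_self s
    exact (Finset.mem_sdiff.1 this).2
  have hother : ∀ t, 1 ≤ t → t ≤ j → t ≠ s → t ∈ D.image szf := by
    intro t h1 h2 hne
    by_contra h
    have : t ∈ Finset.Icc 1 j \ D.image szf := Finset.mem_sdiff.2 ⟨Finset.mem_Icc.2 ⟨h1, h2⟩, h⟩
    rw [hs, Finset.mem_singleton] at this
    exact hne this
  have hs1 : 1 ≤ s := (Finset.mem_Icc.1 hsIcc).1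
  have hsj : s ≤ j := (Finset.mem_Icc.1 hsIcc).2
  have hDsz : ∀ x ∈ D, szf x ≠ s := fun x hx h => hsnot (Finset.mem_image.2 ⟨x, hx, h⟩)
  -- validity data
  set VAL : SV n → Prop := fun y => y ∉ D ∧ y ≠ 0 ∧
      (∀ i : Fin n, y i ≠ 0 → (i : ℕ) < j) ∧ y p ≠ SignType.neg ∧
      gchain (insert y D) with hVAL
  have hvalid_size : ∀ y, VAL y → szf y = s := by
    rintro y ⟨hyD, hy0, hyb, -, hych⟩
    have hins : (insert y D).card = j := by
      rw [Finset.card_insert_of_notMem hyD, hcard]; omega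
    have hinsb : bnd j (insert y D) := by
      intro x hx
      rcases Finset.mem_insert.1 hx with rfl | hx'
      · exact hyb
      · exact hb x hx'
    have himg := sizes_eq_Icc hjn hych hins hinsb
    rw [Finset.image_insert] at himg
    have hyIcc : szf y ∈ Finset.Icc 1 j := by
      rw [← himg]; exact Finset.mem_insert_self _ _
    by_contra hne
    have : szf y ∈ D.image szf := hother _ (Finset.mem_Icc.1 hyIcc).1 (Finset.mem_Icc.1 hyIcc).2 hne
    obtain ⟨x, hx, hxy⟩ := Finset.mem_image.1 this
    have : x = y := card_supp_injOn hych (by simp [hx]) (by simp) hxy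
    exact hyD (this ▸ hx)
  have hcomp_ins : ∀ y, VAL y → ∀ x ∈ D, (szf x < s → sle x y) ∧ (s < szf x → sle y x) := by
    rintro y hv x hx
    obtain ⟨hyD, hy0, hyb, hyp, hych⟩ := hv
    have hsy := hvalid_size y ⟨hyD, hy0, hyb, hyp, hych⟩
    constructor
    · intro hlt
      refine sle_of_card_le hych (by simp [hx]) (by simp) ?_
      show szf x ≤ szf y
      rw [hsy]; exact hlt.le
    · intro hlt
      refine sle_of_card_le hych (by simp) (by simp [hx]) ?_
      show szf y ≤ szf x
      rw [hsy]; exact hlt.le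
  have hDdichot : ∀ x ∈ D, szf x ≤ s - 1 ∨ s + 1 ≤ szf x := by
    intro x hx
    have h1 : szf x ∈ D.image szf := Finset.mem_image.2 ⟨x, hx, rfl⟩
    have h2 := hDsz x hx
    have h3 := hIccD h1
    rw [Finset.mem_Icc] at h3
    omega
  rcases lt_or_eq_of_le hsj with hlt | hseq
  · -- CASE s < j : two extensions, and the boundary condition fails
    obtain ⟨Z, hZ, hZsz⟩ := Finset.mem_image.1 (hother j hj1 le_rfl (by omega))
    have hZsupp : supp Z = filterLT j := by
      have e1 : (supp Z).card = j := hZsz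
      exact Finset.eq_of_subset_of_card_le (supp_subset_filterLT hb hZ)
        (by rw [card_filterLT hjn, e1])
    have hZp : Z p ≠ 0 := by
      have : p ∈ supp Z := by
        rw [hZsupp]; simp [filterLT, hpj]
      exact mem_supp.1 this
    rw [if_neg (fun hall => hZp (hall Z hZ))]
    obtain ⟨z, hz, hzsz⟩ := Finset.mem_image.1 (hother (s+1) (by omega) (by omega) (by omega))
    -- lower neighbour w (possibly the zero vector when s = 1)
    obtain ⟨w, hw0D, hwcard, hwz, hwlow⟩ : ∃ w : SV n, (w = 0 ∨ w ∈ D) ∧ szf w = s - 1 ∧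
        sle w z ∧ (∀ x ∈ D, szf x ≤ s - 1 → sle x w) := by
      rcases Nat.eq_or_lt_of_le hs1 with h1 | h2
      · refine ⟨0, Or.inl rfl, ?_, sle_zero z, ?_⟩
        · rw [hszf]; simp [supp_zero]; omega
        · intro x hx hxs
          exfalso
          have : 1 ≤ szf x := Finset.card_pos.2 (supp_nonempty (hD.1 x hx))
          omega
      · obtain ⟨w, hw, hwsz⟩ := Finset.mem_image.1 (hother (s-1) (by omega) (by omega) (by omega))
        refine ⟨w, Or.inr hw, hwsz, ?_, ?_⟩
        · refine sle_of_card_le hD hw hz ?_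
          have e1 : (supp w).card = s - 1 := hwsz
          have e2 : (supp z).card = s + 1 := hzsz
          omega
        · intro x hx hxs
          refine sle_of_card_le hD hx hw ?_
          have e1 : (supp w).card = s - 1 := hwsz
          have e2 : (supp x).card ≤ s - 1 := hxs
          omega
    have hsupwz : supp w ⊆ supp z := supp_mono hwz
    have hdiffcard : (supp z \ supp w).card = 2 := by
      rw [Finset.card_sdiff_of_subset hsupwz]
      have : (supp z).card = s + 1 := hzsz
      have : (supp w).card = s - 1 := hwcard
      omega
    set F : Fin n → SV n := fun t => (fun i => if i ∈ supp w ∨ i = t then z i else 0) with hF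
    have hFite : ∀ t i, F t i = if i ∈ supp w ∨ i = t then z i else 0 := fun t i => rfl
    have hFsupp : ∀ t ∈ supp z \ supp w, supp (F t) = insert t (supp w) := by
      intro t ht
      rw [Finset.mem_sdiff] at ht
      ext i
      rw [mem_supp, Finset.mem_insert, hFite]
      by_cases hc : i ∈ supp w ∨ i = t
      · rw [if_pos hc]
        constructor
        · intro _; exact hc.symm
        · intro _
          rcases hc with hc | rfl
          · exact mem_supp.1 (hsupwz hc)
          · exact mem_supp.1 ht.1
      · rw [if_neg hc]
        push_neg at hc
        constructor
        · intro h; exact absurd rfl h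
        · rintro (rfl | h)
          · exact (hc.2 rfl).elim
          · exact (hc.1 h).elim
    have hFz : ∀ t, sle (F t) z := by
      intro t i hi
      rw [hFite] at hi ⊢
      by_cases hc : i ∈ supp w ∨ i = t
      · rw [if_pos hc]
      · rw [if_neg hc] at hi; exact absurd rfl hi
    have hwF : ∀ t, sle w (F t) := by
      intro t i hi
      rw [hFite, if_pos (Or.inl (mem_supp.2 hi))]
      exact hwz i hi
    have hset : Finset.univ.filter VAL = (supp z \ supp w).image F := by
      ext y
      simp only [Finset.mem_filter, Finset.mem_univ, true_and, Finset.mem_image]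
      constructor
      · intro hv
        obtain ⟨hyD, hy0, hyb, hyp, hych⟩ := hv
        have hsy : szf y = s := hvalid_size y ⟨hyD, hy0, hyb, hyp, hych⟩
        have hyz : sle y z := by
          refine sle_of_card_le hych (by simp) (by simp [hz]) ?_
          show szf y ≤ szf z
          rw [hsy, hzsz]; omega
        have hwy : sle w y := by
          rcases hw0D with rfl | hwD
          · exact sle_zero y
          · refine sle_of_card_le hych (by simp [hwD]) (by simp) ?_
            show szf w ≤ szf y
            rw [hsy, hwcard]; omega
        have hsub1 : supp w ⊆ supp y := supp_mono hwy
        have hsub2 : supp y ⊆ supp z := supp_mono hyz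
        obtain ⟨t, ht⟩ : ∃ t, supp y \ supp w = {t} := by
          apply Finset.card_eq_one.1
          rw [Finset.card_sdiff_of_subset hsub1]
          have h1 : (supp y).card = s := hsy
          have h2 : (supp w).card = s - 1 := hwcard
          omega
        have htmem : t ∈ supp y \ supp w := by rw [ht]; exact Finset.mem_singleton_self t
        rw [Finset.mem_sdiff] at htmem
        refine ⟨t, Finset.mem_sdiff.2 ⟨hsub2 htmem.1, htmem.2⟩, ?_⟩
        have hysupp : supp y = insert t (supp w) := by
          have h1 : insert t (supp w) ⊆ supp y :=
            Finset.insert_subset htmem.1 hsub1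
          apply (Finset.eq_of_subset_of_card_le h1 ?_).symm
          rw [Finset.card_insert_of_notMem htmem.2]
          have : (supp y).card = s := hsy
          have : (supp w).card = s - 1 := hwcard
          omega
        funext i
        rw [hFite]
        by_cases hyi : y i = 0
        · have hni : ¬ (i ∈ supp w ∨ i = t) := by
            rintro (hc | rfl)
            · exact (mem_supp.1 (hsub1 hc)) hyi
            · exact (mem_supp.1 htmem.1) hyi
          rw [if_neg hni, hyi]
        · have hmem : i ∈ supp y := mem_supp.2 hyi
          rw [hysupp, Finset.mem_insert] at hmem
          rw [if_pos (hmem.symm.imp id id), hyz i hyi]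
      · rintro ⟨t, ht, rfl⟩
        have htd := Finset.mem_sdiff.1 ht
        have hFt0 : F t t ≠ 0 := by
          rw [hFite, if_pos (Or.inr rfl)]
          exact mem_supp.1 htd.1
        have hFne : F t ≠ 0 := ne_zero_of_supp hFt0
        have hFsz : szf (F t) = s := by
          show (supp (F t)).card = s
          rw [hFsupp t ht, Finset.card_insert_of_notMem htd.2]
          have : (supp w).card = s - 1 := hwcard
          omega
        have hFD : F t ∉ D := fun hmem => (hDsz _ hmem) hFsz
        have hFb : ∀ i : Fin n, F t i ≠ 0 → (i : ℕ) < j := by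
          intro i hi
          have : z i ≠ 0 := by
            rw [hFite] at hi
            by_cases hc : i ∈ supp w ∨ i = t
            · rwa [if_pos hc] at hi
            · rw [if_neg hc] at hi; exact absurd rfl hi
          exact hb z hz i this
        have hFp : F t p ≠ SignType.neg := by
          rw [hFite]
          by_cases hc : p ∈ supp w ∨ p = t
          · rw [if_pos hc]; exact hH z hz
          · rw [if_neg hc]; simp
        refine ⟨hFD, hFne, hFb, hFp, ?_⟩
        constructor
        · intro x hx
          rcases Finset.mem_insert.1 hx with rfl | hx'
          · exact hFne
          · exact hD.1 x hx'
        · intro x hx y' hy'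
          rcases Finset.mem_insert.1 hx with rfl | hx' <;>
            rcases Finset.mem_insert.1 hy' with rfl | hy''
          · left; exact sle_refl _
          · -- F t vs element of D
            rcases hDdichot y' hy'' with hle | hge
            · right; exact sle_trans (hwlow y' hy'' hle) (hwF t)
            · left; refine sle_trans (hFz t) (sle_of_card_le hD hz hy'' ?_)
              show szf z ≤ szf y'
              rw [hzsz]; omega
          · rcases hDdichot x hx' with hle | hge
            · left; exact sle_trans (hwlow x hx' hle) (hwF t)
            · right; refine sle_trans (hFz t) (sle_of_card_le hD hz hx' ?_)
              show szf z ≤ szf x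
              rw [hzsz]; omega
          · exact hD.2 x hx' y' hy''
    rw [hset, Finset.card_image_of_injOn, hdiffcard]
    -- injectivity of F on supp z \ supp w
    intro t1 h1 t2 h2 heq
    by_contra hne
    have e1 : F t1 t1 = z t1 := by
      rw [hFite, if_pos (Or.inr rfl)]
    have e2 : F t2 t1 = 0 := by
      have h1' := Finset.mem_sdiff.1 (Finset.mem_coe.1 h1)
      rw [hFite, if_neg]
      rintro (hc | hc)
      · exact h1'.2 hc
      · exact hne hc
    rw [heq] at e1
    rw [e1] at e2
    exact (mem_supp.1 (Finset.mem_sdiff.1 (Finset.mem_coe.1 h1)).1) e2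
  · -- CASE s = j : top extension
    subst hseq
    -- the top element (or 0 if j = 1)
    obtain ⟨T, hT0D, hTcard, hTmax, hTbnd, hTp⟩ : ∃ T : SV n, (T = 0 ∨ T ∈ D) ∧
        (supp T).card = s - 1 ∧ (∀ x ∈ D, sle x T) ∧
        (∀ i : Fin n, T i ≠ 0 → (i : ℕ) < s) ∧ T p ≠ SignType.neg := by
      rcases Nat.eq_or_lt_of_le hs1 with h1 | h2
      · refine ⟨0, Or.inl rfl, by simp [supp_zero]; omega, ?_, by simp, by simp⟩
        intro x hx
        exfalso
        have hxd := hDdichot x hx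
        have h3 := hIccD (Finset.mem_image.2 ⟨x, hx, rfl⟩)
        rw [Finset.mem_Icc] at h3
        omega
      · obtain ⟨T, hT, hTsz⟩ := Finset.mem_image.1 (hother (s-1) (by omega) (by omega) (by omega))
        refine ⟨T, Or.inr hT, hTsz, ?_, hb T hT, hH T hT⟩
        intro x hx
        refine sle_of_card_le hD hx hT ?_
        have e1 : (supp T).card = s - 1 := hTsz
        have e2 := hDdichot x hx
        have e3 := hDsz x hx
        have e4 : (supp x).card = szf x := rfl
        have h3 := hIccD (Finset.mem_image.2 ⟨x, hx, rfl⟩)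
        rw [Finset.mem_Icc] at h3
        omega
    have hTsub : supp T ⊆ filterLT s := by
      intro i hi
      simp only [filterLT, Finset.mem_filter, Finset.mem_univ, true_and]
      exact hTbnd i (mem_supp.1 hi)
    obtain ⟨t₀, ht₀⟩ : ∃ t₀, filterLT s \ supp T = {t₀} := by
      apply Finset.card_eq_one.1
      rw [Finset.card_sdiff_of_subset hTsub, card_filterLT hjn, hTcard]
      omega
    have ht₀mem : t₀ ∈ filterLT s ∧ t₀ ∉ supp T := by
      have : t₀ ∈ filterLT s \ supp T := by rw [ht₀]; exact Finset.mem_singleton_self t₀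
      exact Finset.mem_sdiff.1 this
    have hfull : (filterLT s : Finset (Fin n)) = insert t₀ (supp T) := by
      apply Finset.eq_of_subset_of_card_le
      · intro i hi
        by_cases h : i ∈ supp T
        · exact Finset.mem_insert_of_mem h
        · have : i ∈ filterLT s \ supp T := Finset.mem_sdiff.2 ⟨hi, h⟩
          rw [ht₀, Finset.mem_singleton] at this
          rw [this]; exact Finset.mem_insert_self _ _
      · rw [Finset.card_insert_of_notMem ht₀mem.2, card_filterLT hjn, hTcard]
        omega
    have hT0 : T t₀ = 0 := by
      by_contra h
      exact ht₀mem.2 (mem_supp.2 h)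
    set G : SignType → SV n := fun σ => (fun i => if i = t₀ then σ else T i) with hG
    have hGite : ∀ σ i, G σ i = if i = t₀ then σ else T i := fun σ i => rfl
    have hGsupp : ∀ σ : SignType, σ ≠ 0 → supp (G σ) = filterLT s := by
      intro σ hσ
      rw [hfull]
      ext i
      rw [mem_supp, hGite, Finset.mem_insert]
      by_cases h : i = t₀
      · rw [if_pos h]; simp [h, hσ]
      · rw [if_neg h]
        simp only [h, false_or]
        exact mem_supp.symm
    have hGT : ∀ σ, sle T (G σ) := by
      intro σ i hi
      have hit : i ≠ t₀ := fun h => ht₀mem.2 (mem_supp.2 (by rw [← h]; exact hi))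
      rw [hGite, if_neg hit]
    have hGvalid : ∀ σ : SignType, σ ≠ 0 → (G σ) p ≠ SignType.neg → VAL (G σ) := by
      intro σ hσ hGp
      have hGs : szf (G σ) = s := by
        show (supp (G σ)).card = s
        rw [hGsupp σ hσ, card_filterLT hjn]
      refine ⟨fun h => hDsz _ h hGs, ?_, ?_, hGp, ?_⟩
      · apply ne_zero_of_supp (i := t₀)
        rw [hGite, if_pos rfl]; exact hσ
      · intro i hi
        have : i ∈ supp (G σ) := mem_supp.2 hi
        rw [hGsupp σ hσ] at this
        simp only [filterLT, Finset.mem_filter] at this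
        exact this.2
      · constructor
        · intro x hx
          rcases Finset.mem_insert.1 hx with rfl | hx'
          · exact ne_zero_of_supp (i := t₀) (by rw [hGite, if_pos rfl]; exact hσ)
          · exact hD.1 x hx'
        · intro x hx y' hy'
          rcases Finset.mem_insert.1 hx with rfl | hx' <;>
            rcases Finset.mem_insert.1 hy' with rfl | hy''
          · left; exact sle_refl _
          · right; exact sle_trans (hTmax y' hy'') (hGT σ)
          · left; exact sle_trans (hTmax x hx') (hGT σ)
          · exact hD.2 x hx' y' hy''
    have hGchar : ∀ y, VAL y → y = G (y t₀) ∧ y t₀ ≠ 0 := by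
      intro y hv
      obtain ⟨hyD, hy0, hyb, hyp, hych⟩ := hv
      have hsy : szf y = s := hvalid_size y ⟨hyD, hy0, hyb, hyp, hych⟩
      have hysupp : supp y = filterLT s := by
        apply Finset.eq_of_subset_of_card_le
        · intro i hi
          simp only [filterLT, Finset.mem_filter, Finset.mem_univ, true_and]
          exact hyb i (mem_supp.1 hi)
        · rw [card_filterLT hjn]
          exact hsy.ge
      have hyt₀ : y t₀ ≠ 0 := by
        apply mem_supp.1
        rw [hysupp]; exact ht₀mem.1
      have hTy : sle T y := by
        rcases hT0D with rfl | hTD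
        · exact sle_zero y
        · refine sle_of_card_le hych (by simp [hTD]) (by simp) ?_
          show szf T ≤ szf y
          have e1 : szf T = s - 1 := hTcard
          rw [hsy, e1]; omega
      refine ⟨?_, hyt₀⟩
      funext i
      rw [hGite]
      by_cases h : i = t₀
      · rw [if_pos h, h]
      · rw [if_neg h]
        by_cases hTi : T i = 0
        · rw [hTi]
          by_contra hyi
          have : i ∈ supp y := mem_supp.2 hyi
          rw [hysupp, hfull, Finset.mem_insert] at this
          rcases this with rfl | hc
          · exact h rfl
          · exact (mem_supp.1 hc) hTi
        · exact hTy i hTi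
    by_cases ht0p : t₀ = p
    · -- boundary: exactly one extension
      have hcond : ∀ x ∈ D, x p = 0 := by
        intro x hx
        by_contra hxp
        have h1 := hTmax x hx p hxp
        have h2 : T p = 0 := by rw [← ht0p]; exact hT0
        rw [h2] at h1
        exact hxp h1.symm
      rw [if_pos hcond]
      have hset : Finset.univ.filter VAL = {G SignType.pos} := by
        ext y
        simp only [Finset.mem_filter, Finset.mem_univ, true_and, Finset.mem_singleton]
        constructor
        · intro hv
          obtain ⟨hy, hyt₀⟩ := hGchar y hv
          have hyp : y t₀ ≠ SignType.neg := by
            rw [ht0p]; exact hv.2.2.2.1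
          have : y t₀ = SignType.pos := by
            cases hq : y t₀
            · exact absurd hq hyt₀
            · exact absurd hq hyp
            · rfl
          rw [hy, this]
        · rintro rfl
          apply hGvalid _ (by simp)
          rw [hGite, if_pos ht0p.symm]
          simp
      rw [hset, Finset.card_singleton]
    · -- interior: exactly two extensions
      have hTpmem : p ∈ supp T := by
        have hpf : p ∈ (filterLT s : Finset (Fin n)) := by
          simp only [filterLT, Finset.mem_filter, Finset.mem_univ, true_and]
          omega
        rw [hfull, Finset.mem_insert] at hpf
        rcases hpf with rfl | h
        · exact absurd rfl ht0p
        · exact h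
      have hTne : T ≠ 0 := ne_zero_of_supp (mem_supp.1 hTpmem)
      have hTD : T ∈ D := by
        rcases hT0D with rfl | h
        · exact absurd rfl hTne
        · exact h
      rw [if_neg (fun hall => (mem_supp.1 hTpmem) (hall T hTD))]
      have hGp : ∀ σ, G σ p = T p := by
        intro σ
        rw [hGite, if_neg (fun h => ht0p h.symm)]
      have hset : Finset.univ.filter VAL = {G SignType.pos, G SignType.neg} := by
        ext y
        simp only [Finset.mem_filter, Finset.mem_univ, true_and, Finset.mem_insert,
          Finset.mem_singleton]
        constructor
        · intro hv
          obtain ⟨hy, hyt₀⟩ := hGchar y hv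
          cases hq : y t₀
          · exact absurd hq hyt₀
          · right; rw [hy, hq]
          · left; rw [hy, hq]
        · rintro (rfl | rfl)
          · exact hGvalid _ (by simp) (by rw [hGp]; exact hTp)
          · exact hGvalid _ (by simp) (by rw [hGp]; exact hTp)
      rw [hset]
      rw [Finset.card_insert_of_notMem, Finset.card_singleton]
      rw [Finset.mem_singleton]
      intro h
      have : G SignType.pos t₀ = G SignType.neg t₀ := by rw [h]
      rw [hGite, hGite, if_pos rfl, if_pos rfl] at this
      exact absurd this (by simp)

-- labels of a chain
def lab (ℓ : SV n → ℤ) (c : Finset (SV n)) : Multiset ℤ := c.val.map ℓ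

lemma lab_erase (ℓ : SV n → ℤ) {c : Finset (SV n)} {x : SV n} (hx : x ∈ c) :
    lab ℓ (c.erase x) = (lab ℓ c).erase (ℓ x) := by
  rw [lab, lab, Finset.erase_val, map_erase_mem ℓ c.val hx]

lemma lab_insert (ℓ : SV n → ℤ) {c : Finset (SV n)} {y : SV n} (hy : y ∉ c) :
    lab ℓ (insert y c) = ℓ y ::ₘ lab ℓ c := by
  rw [lab, lab, Finset.insert_val_of_notMem hy, Multiset.map_cons]

lemma not_AltP_AltN {M : Multiset ℤ} (hM : M ≠ 0) : ¬ (AltP M ∧ AltN M) := by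
  rintro ⟨⟨l1, hl1, hs1, ha1⟩, ⟨l2, hl2, hs2, ha2⟩⟩
  have hperm : l1.Perm l2 := Multiset.coe_eq_coe.1 (hl1.trans hl2.symm)
  have := srtd_unique hperm hs1 hs2
  subst this
  cases l1 with
  | nil => exact hM (by rw [← hl1]; rfl)
  | cons a t =>
    simp only [altB, Bool.and_eq_true, beq_iff_eq] at ha1 ha2
    rw [ha1.1] at ha2
    exact Bool.true_eq_false.mp ha2.1

/-- Double counting: hemisphere j-chains with alternating labels, versus
    boundary (j-1)-chains with positively alternating labels. -/
lemma stepG2 (ℓ : SV n → ℤ) (hz : ∀ x : SV n, x ≠ 0 → ℓ x ≠ 0)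
    (hcomp : ∀ x y : SV n, x ≠ 0 → x ≠ y → sle x y → ℓ x ≠ -ℓ y)
    {j : ℕ} (hj1 : 1 ≤ j) (hjn : j ≤ n) (p : Fin n) (hp : (p : ℕ) = j - 1) :
    (Finset.univ.filter (fun c : Finset (SV n) => gchain c ∧ c.card = j ∧ bnd j c ∧
      (∀ x ∈ c, x p ≠ SignType.neg) ∧ (AltP (lab ℓ c) ∨ AltN (lab ℓ c)))).card % 2
    = (Finset.univ.filter (fun c : Finset (SV n) => gchain c ∧ c.card = j - 1 ∧
        bnd (j-1) c ∧ AltP (lab ℓ c))).card % 2 := by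
  classical
  have hj' : j - 1 + 1 = j := by omega
  have hj2 : j - 1 ≤ j := by omega
  have e229 : ¬ ((p : ℕ) < j - 1) := by omega
  have harith : ∀ m : ℕ, m < j → m ≠ j - 1 → m < j - 1 := by intro m h1 h2; omega
  set ball : Finset (Finset (SV n)) := Finset.univ.filter
    (fun c => gchain c ∧ c.card = j ∧ bnd j c ∧ (∀ x ∈ c, x p ≠ SignType.neg)) with hball
  set door : Finset (Finset (SV n)) := Finset.univ.filter
    (fun c => gchain c ∧ c.card = j - 1 ∧ bnd j c ∧ (∀ x ∈ c, x p ≠ SignType.neg) ∧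
      AltP (lab ℓ c)) with hdoor
  -- the incidence count
  set T : ℕ := ∑ C ∈ ball, (C.filter (fun x => AltP (lab ℓ (C.erase x)))).card with hT
  -- noncomplementarity of labels on a chain
  have hlabs : ∀ C : Finset (SV n), gchain C →
      (∀ a ∈ lab ℓ C, a ≠ 0) ∧ (∀ a ∈ lab ℓ C, -a ∉ lab ℓ C) := by
    intro C hch
    constructor
    · intro a ha
      obtain ⟨x, hx, rfl⟩ := Multiset.mem_map.1 ha
      exact hz x (hch.1 x hx)
    · intro a ha hna
      obtain ⟨x, hx, rfl⟩ := Multiset.mem_map.1 ha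
      obtain ⟨y, hy, hyx⟩ := Multiset.mem_map.1 hna
      by_cases hxy : x = y
      · subst hxy
        have : ℓ x = 0 := by omega
        exact hz x (hch.1 x hx) this
      · rcases hch.2 x hx y hy with hs | hs
        · exact hcomp x y (hch.1 x hx) hxy hs (by omega)
        · exact hcomp y x (hch.1 y hy) (Ne.symm hxy) hs (by omega)
  -- Step 1 : T ≡ #(alternating ball chains)
  have step1 : T % 2 = (Finset.univ.filter (fun c : Finset (SV n) => gchain c ∧ c.card = j ∧
      bnd j c ∧ (∀ x ∈ c, x p ≠ SignType.neg) ∧ (AltP (lab ℓ c) ∨ AltN (lab ℓ c)))).card % 2 := by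
    have hsplit : (Finset.univ.filter (fun c : Finset (SV n) => gchain c ∧ c.card = j ∧
        bnd j c ∧ (∀ x ∈ c, x p ≠ SignType.neg) ∧ (AltP (lab ℓ c) ∨ AltN (lab ℓ c))))
        = ball.filter (fun c => AltP (lab ℓ c) ∨ AltN (lab ℓ c)) := by
      rw [hball, Finset.filter_filter]
      apply Finset.filter_congr
      intro c _
      tauto
    rw [hsplit, Finset.card_filter, hT, Finset.sum_nat_mod,
      Finset.sum_nat_mod ball 2 (fun c => if AltP (lab ℓ c) ∨ AltN (lab ℓ c) then 1 else 0)]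
    congr 1
    apply Finset.sum_congr rfl
    intro C hC
    rw [hball, Finset.mem_filter] at hC
    obtain ⟨-, hch, hcard, -, -⟩ := hC
    have hl := hlabs C hch
    have hpercard : (C.filter (fun x => AltP (lab ℓ (C.erase x)))).card
        = ((lab ℓ C).map (fun a => if AltP ((lab ℓ C).erase a) then (1:ℕ) else 0)).sum := by
      rw [Finset.card_filter]
      have hmm : ((lab ℓ C).map (fun a => if AltP ((lab ℓ C).erase a) then (1:ℕ) else 0))
          = C.val.map (fun x => if AltP ((lab ℓ C).erase (ℓ x)) then (1:ℕ) else 0) := by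
        rw [lab, Multiset.map_map]
        rfl
      rw [hmm]
      have hsum : (∑ x ∈ C, if AltP (lab ℓ (C.erase x)) then (1:ℕ) else 0)
          = (C.val.map (fun x => if AltP (lab ℓ (C.erase x)) then (1:ℕ) else 0)).sum := rfl
      rw [hsum]
      apply congrArg
      apply Multiset.map_congr rfl
      intro x hx
      rw [← lab_erase ℓ hx]
    rw [hpercard, L1M (lab ℓ C) hl.1 hl.2]
    have hMne : lab ℓ C ≠ 0 := by
      intro h
      have hcc : Multiset.card (lab ℓ C) = C.card := by
        rw [lab, Multiset.card_map]
        rfl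
      rw [h] at hcc
      simp at hcc
      omega
    by_cases h1 : AltP (lab ℓ C) <;> by_cases h2 : AltN (lab ℓ C)
    · exact absurd ⟨h1, h2⟩ (not_AltP_AltN hMne)
    · simp [h1, h2]
    · simp [h1, h2]
    · simp [h1, h2]
  -- Step 2 : T = sum over doors of the number of extensions
  have step2 : T = ∑ D ∈ door, (Finset.univ.filter (fun y : SV n => y ∉ D ∧ y ≠ 0 ∧
      (∀ i : Fin n, y i ≠ 0 → (i : ℕ) < j) ∧ y p ≠ SignType.neg ∧
      gchain (insert y D))).card := by
    rw [hT, ← Finset.card_sigma, ← Finset.card_sigma]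
    apply Finset.card_nbij'
      (i := fun (q : Σ _ : Finset (SV n), SV n) =>
        (⟨q.1.erase q.2, q.2⟩ : Σ _ : Finset (SV n), SV n))
      (j := fun (q : Σ _ : Finset (SV n), SV n) =>
        (⟨insert q.2 q.1, q.2⟩ : Σ _ : Finset (SV n), SV n))
    · rintro ⟨C, x⟩ hq
      rw [Finset.mem_coe, Finset.mem_sigma] at hq
      obtain ⟨hC, hx⟩ := hq
      rw [hball, Finset.mem_filter] at hC
      obtain ⟨-, hch, hcard, hbd, hHc⟩ := hC
      rw [Finset.mem_filter] at hx
      obtain ⟨hxC, hAlt⟩ := hx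
      rw [Finset.mem_coe, Finset.mem_sigma]
      constructor
      · rw [hdoor, Finset.mem_filter]
        refine ⟨Finset.mem_univ _, gchain_mono (Finset.erase_subset _ _) hch, ?_, 
          bnd_mono (Finset.erase_subset _ _) hbd, 
          fun y hy => hHc y (Finset.mem_of_mem_erase hy), hAlt⟩
        rw [Finset.card_erase_of_mem hxC, hcard]
      · simp only [Finset.mem_filter, Finset.mem_univ, true_and]
        refine ⟨Finset.notMem_erase _ _, hch.1 x hxC, fun i hi => hbd x hxC i hi,
          hHc x hxC, ?_⟩
        rw [Finset.insert_erase hxC]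
        exact hch
    · rintro ⟨D, y⟩ hq
      rw [Finset.mem_coe, Finset.mem_sigma] at hq
      obtain ⟨hD, hy⟩ := hq
      rw [hdoor, Finset.mem_filter] at hD
      obtain ⟨-, hch, hcard, hbd, hHc, hAlt⟩ := hD
      simp only [Finset.mem_filter, Finset.mem_univ, true_and] at hy
      obtain ⟨hyD, hy0, hyb, hyp, hych⟩ := hy
      rw [Finset.mem_coe, Finset.mem_sigma]
      constructor
      · rw [hball, Finset.mem_filter]
        refine ⟨Finset.mem_univ _, hych, ?_, ?_, ?_⟩
        · rw [Finset.card_insert_of_notMem hyD, hcard, hj']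
        · intro x hx
          rcases Finset.mem_insert.1 hx with rfl | hx'
          · exact hyb
          · exact hbd x hx'
        · intro x hx
          rcases Finset.mem_insert.1 hx with rfl | hx'
          · exact hyp
          · exact hHc x hx'
      · rw [Finset.mem_filter]
        refine ⟨Finset.mem_insert_self _ _, ?_⟩
        rw [Finset.erase_insert hyD]
        exact hAlt
    · rintro ⟨C, x⟩ hq
      rw [Finset.mem_coe, Finset.mem_sigma] at hq
      have hxC : x ∈ C := Finset.mem_of_mem_filter _ hq.2
      exact Sigma.ext (Finset.insert_erase hxC) (heq_of_eq rfl)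
    · rintro ⟨D, y⟩ hq
      rw [Finset.mem_coe, Finset.mem_sigma] at hq
      simp only [Finset.mem_filter, Finset.mem_univ, true_and] at hq
      exact Sigma.ext (Finset.erase_insert hq.2.1) (heq_of_eq rfl)
  -- Step 3 : apply EXT and take parity
  have step3 : T % 2 = (door.filter (fun D => ∀ x ∈ D, x p = 0)).card % 2 := by
    rw [step2, Finset.card_filter, Finset.sum_nat_mod,
      Finset.sum_nat_mod door 2 (fun D => if ∀ x ∈ D, x p = 0 then 1 else 0)]
    congr 1
    apply Finset.sum_congr rfl
    intro D hD
    rw [hdoor, Finset.mem_filter] at hD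
    obtain ⟨-, hch, hcard, hbd, hHc, -⟩ := hD
    rw [EXT hj1 hjn p hp D hch hcard hbd hHc]
    by_cases h : ∀ x ∈ D, x p = 0
    · rw [if_pos h, if_pos h]
    · rw [if_neg h, if_neg h]
  -- Step 4 : identify boundary doors with the (j-1)-sphere chains
  have step4 : door.filter (fun D => ∀ x ∈ D, x p = 0)
      = Finset.univ.filter (fun c : Finset (SV n) => gchain c ∧ c.card = j - 1 ∧
          bnd (j-1) c ∧ AltP (lab ℓ c)) := by
    rw [hdoor, Finset.filter_filter]
    apply Finset.filter_congr
    intro c _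
    constructor
    · rintro ⟨⟨hch, hcard, hbd, hHc, hAlt⟩, hbdry⟩
      refine ⟨hch, hcard, ?_, hAlt⟩
      intro x hx i hi
      have h1 : (i : ℕ) < j := hbd x hx i hi
      have h2 : i ≠ p := by
        intro h
        exact hi (h ▸ hbdry x hx)
      have h3 : (i : ℕ) ≠ j - 1 := fun h => h2 (Fin.ext (by rw [h, hp]))
      exact harith _ h1 h3
    · rintro ⟨hch, hcard, hbd, hAlt⟩
      have hzero : ∀ x ∈ c, x p = 0 := by
        intro x hx
        by_contra h
        exact e229 (hbd x hx p h)
      exact ⟨⟨hch, hcard, fun x hx i hi => lt_of_lt_of_le (hbd x hx i hi) hj2,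
        fun x hx => by rw [hzero x hx]; simp, hAlt⟩, hzero⟩
  rw [← step1, step3, step4]
-- NEW MATERIAL
lemma lab_ne_zero {ℓ : SV n → ℤ} {c : Finset (SV n)} (h : c.card ≠ 0) : lab ℓ c ≠ 0 := by
  intro h0
  apply h
  have hcc : Multiset.card (lab ℓ c) = c.card := by
    rw [lab, Multiset.card_map]
    rfl
  rw [h0] at hcc
  simpa using hcc.symm

lemma sv_neg_neg (x : SV n) : - -x = x := by
  funext i
  show - - (x i) = x i
  cases (x i) <;> rfl

lemma sv_neg_inj : Function.Injective (fun x : SV n => -x) := by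
  intro a b h
  have := congrArg (fun y : SV n => -y) h
  simpa [sv_neg_neg] using this

def negEmb : SV n ↪ SV n := ⟨fun x => -x, sv_neg_inj⟩

lemma altB_negl {l : List ℤ} (h0 : ∀ a ∈ l, a ≠ 0) (b : Bool) :
    altB b (l.map (fun a => -a)) = altB (!b) l := by
  induction l generalizing b with
  | nil => rfl
  | cons a t ih =>
    have hbeq : ∀ x c : Bool, (!x == c) = (x == !c) := by decide
    have hd : decide (0 < -a) = !decide (0 < a) := by
      by_cases ha : 0 < a
      · have h1 : ¬ (0 < -a) := by omega
        simp [ha, h1]; omega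
      · have h2 : 0 < -a := by
          have := h0 a List.mem_cons_self
          omega
        simp [ha, h2]; omega
    rw [List.map_cons]
    show ((decide (0 < -a) == b) && altB (!b) (t.map (fun a => -a)))
      = ((decide (0 < a) == !b) && altB (!(!b)) t)
    rw [hd, ih (fun x hx => h0 x (List.mem_cons_of_mem a hx)) (!b)]
    cases (decide (0 < a)) <;> cases b <;> rfl

lemma srtd_negl {l : List ℤ} (h : srtd l) : srtd (l.map (fun a => -a)) := by
  rw [srtd, List.Chain', List.isChain_map]
  apply h.imp
  intro a b hab
  simpa using hab

lemma AltN_to_AltP_neg {M : Multiset ℤ} (h0 : ∀ a ∈ M, a ≠ 0) (h : AltN M) :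
    AltP (M.map (fun a => -a)) := by
  obtain ⟨l, hl, hs, ha⟩ := h
  refine ⟨l.map (fun a => -a), by rw [← hl, Multiset.map_coe], srtd_negl hs, ?_⟩
  rw [altB_negl (fun a hax => h0 a (by rw [← hl]; exact Multiset.mem_coe.2 hax)) true]
  exact ha

lemma AltP_to_AltN_neg {M : Multiset ℤ} (h0 : ∀ a ∈ M, a ≠ 0) (h : AltP M) :
    AltN (M.map (fun a => -a)) := by
  obtain ⟨l, hl, hs, ha⟩ := h
  refine ⟨l.map (fun a => -a), by rw [← hl, Multiset.map_coe], srtd_negl hs, ?_⟩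
  rw [altB_negl (fun a hax => h0 a (by rw [← hl]; exact Multiset.mem_coe.2 hax)) false]
  exact ha

lemma map_neg_map_neg (M : Multiset ℤ) : (M.map (fun a => -a)).map (fun a => -a) = M := by
  rw [Multiset.map_map]
  have h : ((fun a : ℤ => -a) ∘ fun a : ℤ => -a) = id := by funext a; simp
  rw [h, Multiset.map_id]

lemma sgn_neg_ne_neg {s : SignType} (h : s ≠ SignType.pos) : -s ≠ SignType.neg := by
  cases s <;> simp_all <;> decide
lemma sgn_neg_ne_pos {s : SignType} (h : s ≠ SignType.neg) : -s ≠ SignType.pos := by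
  cases s <;> simp_all <;> decide

lemma map_negEmb_negEmb (c : Finset (SV n)) : (c.map negEmb).map negEmb = c := by
  rw [Finset.map_map]
  ext y
  simp only [Finset.mem_map, Function.Embedding.trans_apply]
  constructor
  · rintro ⟨a, ha, rfl⟩
    show - -a ∈ c
    rwa [sv_neg_neg]
  · intro hy
    exact ⟨y, hy, by show - -y = y; rw [sv_neg_neg]⟩

lemma lab_map_negEmb (ℓ : SV n → ℤ) (hanti : ∀ x : SV n, x ≠ 0 → ℓ (-x) = -ℓ x)
    {c : Finset (SV n)} (hch : gchain c) :
    lab ℓ (c.map negEmb) = (lab ℓ c).map (fun a => -a) := by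
  rw [lab, Finset.map_val, Multiset.map_map, lab, Multiset.map_map]
  apply Multiset.map_congr rfl
  intro x hx
  show ℓ (-x) = -ℓ x
  exact hanti x (hch.1 x hx)

/-- transfer of all chain properties under global negation -/
lemma neg_transfer (ℓ : SV n → ℤ) (hz : ∀ x : SV n, x ≠ 0 → ℓ x ≠ 0)
    (hanti : ∀ x : SV n, x ≠ 0 → ℓ (-x) = -ℓ x) {j : ℕ} (p : Fin n)
    {c : Finset (SV n)} (hch : gchain c) (hcard : c.card = j) (hbd : bnd j c)
    (hH : ∀ x ∈ c, x p ≠ SignType.pos) (hAlt : AltP (lab ℓ c)) :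
    gchain (c.map negEmb) ∧ (c.map negEmb).card = j ∧ bnd j (c.map negEmb) ∧
      (∀ x ∈ c.map negEmb, x p ≠ SignType.neg) ∧ AltN (lab ℓ (c.map negEmb)) := by
  have hmem : ∀ y, y ∈ c.map negEmb ↔ ∃ a ∈ c, -a = y := fun y => Finset.mem_map
  refine ⟨⟨?_, ?_⟩, by rw [Finset.card_map]; exact hcard, ?_, ?_, ?_⟩
  · intro y hy
    obtain ⟨a, ha, rfl⟩ := (hmem y).1 hy
    exact neg_ne_zero (hch.1 a ha)
  · intro y hy y' hy'
    obtain ⟨a, ha, rfl⟩ := (hmem y).1 hy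
    obtain ⟨b, hb, rfl⟩ := (hmem y').1 hy'
    rcases hch.2 a ha b hb with hs | hs
    · exact Or.inl (sle_neg hs)
    · exact Or.inr (sle_neg hs)
  · intro y hy i hi
    obtain ⟨a, ha, rfl⟩ := (hmem y).1 hy
    apply hbd a ha i
    intro h
    apply hi
    show -(a i) = 0
    rw [h]; rfl
  · intro y hy
    obtain ⟨a, ha, rfl⟩ := (hmem y).1 hy
    exact sgn_neg_ne_neg (hH a ha)
  · rw [lab_map_negEmb ℓ hanti hch]
    apply AltP_to_AltN_neg ?_ hAlt
    intro a ha
    obtain ⟨x, hx, rfl⟩ := Multiset.mem_map.1 ha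
    exact hz x (hch.1 x hx)

lemma neg_transfer' (ℓ : SV n → ℤ) (hz : ∀ x : SV n, x ≠ 0 → ℓ x ≠ 0)
    (hanti : ∀ x : SV n, x ≠ 0 → ℓ (-x) = -ℓ x) {j : ℕ} (p : Fin n)
    {c : Finset (SV n)} (hch : gchain c) (hcard : c.card = j) (hbd : bnd j c)
    (hH : ∀ x ∈ c, x p ≠ SignType.neg) (hAlt : AltN (lab ℓ c)) :
    gchain (c.map negEmb) ∧ (c.map negEmb).card = j ∧ bnd j (c.map negEmb) ∧
      (∀ x ∈ c.map negEmb, x p ≠ SignType.pos) ∧ AltP (lab ℓ (c.map negEmb)) := by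
  have hmem : ∀ y, y ∈ c.map negEmb ↔ ∃ a ∈ c, -a = y := fun y => Finset.mem_map
  refine ⟨⟨?_, ?_⟩, by rw [Finset.card_map]; exact hcard, ?_, ?_, ?_⟩
  · intro y hy
    obtain ⟨a, ha, rfl⟩ := (hmem y).1 hy
    exact neg_ne_zero (hch.1 a ha)
  · intro y hy y' hy'
    obtain ⟨a, ha, rfl⟩ := (hmem y).1 hy
    obtain ⟨b, hb, rfl⟩ := (hmem y').1 hy'
    rcases hch.2 a ha b hb with hs | hs
    · exact Or.inl (sle_neg hs)
    · exact Or.inr (sle_neg hs)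
  · intro y hy i hi
    obtain ⟨a, ha, rfl⟩ := (hmem y).1 hy
    apply hbd a ha i
    intro h
    apply hi
    show -(a i) = 0
    rw [h]; rfl
  · intro y hy
    obtain ⟨a, ha, rfl⟩ := (hmem y).1 hy
    exact sgn_neg_ne_pos (hH a ha)
  · have h0 : ∀ a ∈ lab ℓ c, a ≠ 0 := by
      intro a ha
      obtain ⟨x, hx, rfl⟩ := Multiset.mem_map.1 ha
      exact hz x (hch.1 x hx)
    rw [lab_map_negEmb ℓ hanti hch]
    exact AltN_to_AltP_neg h0 hAlt

/-- the sphere count equals the hemisphere count -/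
lemma stepG3 (ℓ : SV n → ℤ) (hz : ∀ x : SV n, x ≠ 0 → ℓ x ≠ 0)
    (hanti : ∀ x : SV n, x ≠ 0 → ℓ (-x) = -ℓ x)
    {j : ℕ} (hj1 : 1 ≤ j) (hjn : j ≤ n) (p : Fin n) (hp : (p : ℕ) = j - 1) :
    (Finset.univ.filter (fun c : Finset (SV n) =>
        gchain c ∧ c.card = j ∧ bnd j c ∧ AltP (lab ℓ c))).card
    = (Finset.univ.filter (fun c : Finset (SV n) => gchain c ∧ c.card = j ∧ bnd j c ∧
        (∀ x ∈ c, x p ≠ SignType.neg) ∧ (AltP (lab ℓ c) ∨ AltN (lab ℓ c)))).card := by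
  classical
  -- dichotomy
  have hdich : ∀ c : Finset (SV n), gchain c → c.card = j → bnd j c →
      (((∀ x ∈ c, x p ≠ SignType.neg) ∨ (∀ x ∈ c, x p ≠ SignType.pos)) ∧
      ¬ ((∀ x ∈ c, x p ≠ SignType.neg) ∧ (∀ x ∈ c, x p ≠ SignType.pos))) := by
    intro c hch hcard hbd
    have hj' : j ∈ c.image (fun x => (supp x).card) := by
      rw [sizes_eq_Icc hjn hch hcard hbd, Finset.mem_Icc]
      omega
    obtain ⟨Z, hZ, hZsz⟩ := Finset.mem_image.1 hj'
    have hZsupp : supp Z = filterLT j := by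
      apply Finset.eq_of_subset_of_card_le (supp_subset_filterLT hbd hZ)
      rw [card_filterLT hjn, hZsz]
    have hZp : Z p ≠ 0 := by
      apply mem_supp.1
      rw [hZsupp]
      simp only [filterLT, Finset.mem_filter, Finset.mem_univ, true_and]
      omega
    have hall : ∀ x ∈ c, x p = 0 ∨ x p = Z p := by
      intro x hx
      rcases hch.2 x hx Z hZ with hs | hs
      · by_cases h : x p = 0
        · exact Or.inl h
        · exact Or.inr (hs p h).symm
      · exact Or.inr (hs p hZp)
    constructor
    · cases hq : Z p with
      | zero => exact absurd hq hZp
      | neg =>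
        right
        intro x hx h
        rcases hall x hx with h0 | h0 <;> rw [h] at h0
        · exact absurd h0 (by decide)
        · rw [hq] at h0; exact absurd h0 (by decide)
      | pos =>
        left
        intro x hx h
        rcases hall x hx with h0 | h0 <;> rw [h] at h0
        · exact absurd h0 (by decide)
        · rw [hq] at h0; exact absurd h0 (by decide)
    · rintro ⟨h1, h2⟩
      have := h1 Z hZ
      have := h2 Z hZ
      cases hq : Z p
      · exact hZp hq
      · exact (h1 Z hZ) hq
      · exact (h2 Z hZ) hq
  set X : Finset (Finset (SV n)) := Finset.univ.filter
    (fun c => gchain c ∧ c.card = j ∧ bnd j c ∧ (∀ x ∈ c, x p ≠ SignType.neg) ∧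
      AltP (lab ℓ c)) with hX
  set Y : Finset (Finset (SV n)) := Finset.univ.filter
    (fun c => gchain c ∧ c.card = j ∧ bnd j c ∧ (∀ x ∈ c, x p ≠ SignType.pos) ∧
      AltP (lab ℓ c)) with hY
  set X' : Finset (Finset (SV n)) := Finset.univ.filter
    (fun c => gchain c ∧ c.card = j ∧ bnd j c ∧ (∀ x ∈ c, x p ≠ SignType.neg) ∧
      AltN (lab ℓ c)) with hX'
  have hLHS : (Finset.univ.filter (fun c : Finset (SV n) =>
      gchain c ∧ c.card = j ∧ bnd j c ∧ AltP (lab ℓ c))).card = X.card + Y.card := by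
    rw [← Finset.card_filter_add_card_filter_not
      (p := fun c : Finset (SV n) => ∀ x ∈ c, x p ≠ SignType.neg)]
    congr 1
    · rw [hX, Finset.filter_filter]
      apply congrArg Finset.card
      apply Finset.filter_congr
      intro c _
      tauto
    · rw [hY, Finset.filter_filter]
      apply congrArg Finset.card
      apply Finset.filter_congr
      intro c _
      constructor
      · rintro ⟨⟨hch, hcard, hbd, hAlt⟩, hnH⟩
        have := hdich c hch hcard hbd
        refine ⟨hch, hcard, hbd, ?_, hAlt⟩
        tauto
      · rintro ⟨hch, hcard, hbd, hH', hAlt⟩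
        have := hdich c hch hcard hbd
        refine ⟨⟨hch, hcard, hbd, hAlt⟩, ?_⟩
        tauto
  have hRHS : (Finset.univ.filter (fun c : Finset (SV n) =>
      gchain c ∧ c.card = j ∧ bnd j c ∧ (∀ x ∈ c, x p ≠ SignType.neg) ∧
      (AltP (lab ℓ c) ∨ AltN (lab ℓ c)))).card = X.card + X'.card := by
    rw [← Finset.card_filter_add_card_filter_not
      (p := fun c : Finset (SV n) => AltP (lab ℓ c))]
    congr 1
    · rw [hX, Finset.filter_filter]
      apply congrArg Finset.card
      apply Finset.filter_congr
      intro c _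
      tauto
    · rw [hX', Finset.filter_filter]
      apply congrArg Finset.card
      apply Finset.filter_congr
      intro c _
      constructor
      · rintro ⟨⟨hch, hcard, hbd, hH, hor⟩, hnAP⟩
        refine ⟨hch, hcard, hbd, hH, ?_⟩
        tauto
      · rintro ⟨hch, hcard, hbd, hH, hAN⟩
        have hne : lab ℓ c ≠ 0 := lab_ne_zero (by rw [hcard]; omega)
        have := not_AltP_AltN hne
        refine ⟨⟨hch, hcard, hbd, hH, Or.inr hAN⟩, ?_⟩
        tauto
  have hXY : Y.card = X'.card := by
    rw [hY, hX']
    apply Finset.card_nbij' (i := fun c => c.map negEmb) (j := fun c => c.map negEmb)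
    · intro c hc
      simp only [Finset.mem_coe, Finset.mem_filter, Finset.mem_univ, true_and] at hc ⊢
      obtain ⟨hch, hcard, hbd, hH', hAlt⟩ := hc
      obtain ⟨a1, a2, a3, a4, a5⟩ := neg_transfer ℓ hz hanti p hch hcard hbd hH' hAlt
      exact ⟨a1, a2, a3, a4, a5⟩
    · intro c hc
      simp only [Finset.mem_coe, Finset.mem_filter, Finset.mem_univ, true_and] at hc ⊢
      obtain ⟨hch, hcard, hbd, hH, hAN⟩ := hc
      obtain ⟨a1, a2, a3, a4, a5⟩ := neg_transfer' ℓ hz hanti p hch hcard hbd hH hAN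
      exact ⟨a1, a2, a3, a4, a5⟩
    · intro c _
      exact map_negEmb_negEmb c
    · intro c _
      exact map_negEmb_negEmb c
  rw [hLHS, hRHS, hXY]
/-- **Octahedral Tucker lemma**. -/
theorem octTucker (ℓ : SV n → ℤ)
    (hz : ∀ x : SV n, x ≠ 0 → ℓ x ≠ 0)
    (hanti : ∀ x : SV n, x ≠ 0 → ℓ (-x) = -ℓ x)
    (hcomp : ∀ x y : SV n, x ≠ 0 → x ≠ y → sle x y → ℓ x ≠ -ℓ y) :
    ∃ c : Finset (SV n), gchain c ∧ c.card = n ∧ AltP (lab ℓ c) := by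
  classical
  have base : (Finset.univ.filter (fun c : Finset (SV n) =>
      gchain c ∧ c.card = 0 ∧ bnd 0 c ∧ AltP (lab ℓ c))).card = 1 := by
    have hone : (Finset.univ.filter (fun c : Finset (SV n) =>
        gchain c ∧ c.card = 0 ∧ bnd 0 c ∧ AltP (lab ℓ c))) = {∅} := by
      ext c
      simp only [Finset.mem_filter, Finset.mem_univ, true_and, Finset.mem_singleton]
      constructor
      · rintro ⟨-, hcard, -, -⟩
        exact Finset.card_eq_zero.1 hcard
      · rintro rfl
        refine ⟨⟨fun x hx => absurd hx (Finset.notMem_empty x),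
          fun x hx => absurd hx (Finset.notMem_empty x)⟩, Finset.card_empty, 
          fun x hx => absurd hx (Finset.notMem_empty x), ⟨[], rfl, List.IsChain.nil, rfl⟩⟩
    rw [hone, Finset.card_singleton]
  have key : ∀ j, j ≤ n → (Finset.univ.filter (fun c : Finset (SV n) =>
      gchain c ∧ c.card = j ∧ bnd j c ∧ AltP (lab ℓ c))).card % 2 = 1 := by
    intro j
    induction j with
    | zero => intro _; rw [base]
    | succ i ih =>
      intro hle
      have hin : i < n := by omega
      set p : Fin n := ⟨i, hin⟩ with hpdef
      have hp : (p : ℕ) = (i + 1) - 1 := rfl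
      rw [stepG3 ℓ hz hanti (by omega) hle p hp, stepG2 ℓ hz hcomp (by omega) hle p hp]
      have hsimp : i + 1 - 1 = i := rfl
      rw [hsimp] at *
      exact ih (by omega)
  have hn := key n le_rfl
  have hne : (Finset.univ.filter (fun c : Finset (SV n) =>
      gchain c ∧ c.card = n ∧ bnd n c ∧ AltP (lab ℓ c))).Nonempty := by
    rw [← Finset.card_pos]
    omega
  obtain ⟨c, hc⟩ := hne
  rw [Finset.mem_filter] at hc
  exact ⟨c, hc.2.1, hc.2.2.1, hc.2.2.2.2⟩
/-- Lower bound part of Kneser's conjecture. -/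
lemma kneser_lb (n k m : ℕ) (hk : 2 ≤ k) (hn : 2 * k ≤ n) (c : Finset (Fin n) → Fin m)
    (hcol : ∀ S T : Finset (Fin n), S.card = k → T.card = k → Disjoint S T → c S ≠ c T) :
    n - 2 * k + 2 ≤ m := by
  classical
  by_contra hlt
  push_neg at hlt
  have hm' : m ≤ n - 2 * k + 1 := by omega
  rcases Nat.eq_zero_or_pos m with rfl | hm1
  · exact (c ∅).elim0
  obtain ⟨K, hKdef⟩ : ∃ K, K = 2 * k - 2 := ⟨_, rfl⟩
  obtain ⟨Pst, hPst⟩ : ∃ P : SV n → Finset (Fin n),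
      ∀ x, P x = Finset.univ.filter (fun i => x i = SignType.pos) := ⟨_, fun _ => rfl⟩
  obtain ⟨Nst, hNst⟩ : ∃ P : SV n → Finset (Fin n),
      ∀ x, P x = Finset.univ.filter (fun i => x i = SignType.neg) := ⟨_, fun _ => rfl⟩
  obtain ⟨msup, hmsupA⟩ : ∃ f : Finset (Fin n) → ℕ,
      ∀ A, f A = (Finset.powersetCard k A).sup (fun S => (c S).val + 1) := ⟨_, fun _ => rfl⟩
  have hsuple : ∀ A : Finset (Fin n), msup A ≤ m := by
    intro A
    rw [hmsupA]
    apply Finset.sup_le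
    intro S _
    have := (c S).isLt
    omega
  have hsup1 : ∀ A : Finset (Fin n), k ≤ A.card → 1 ≤ msup A := by
    intro A hA
    rw [hmsupA]
    obtain ⟨B, hBsub, hBcard⟩ := Finset.exists_subset_card_eq hA
    have h2 := Finset.le_sup (f := fun S => (c S).val + 1)
      (Finset.mem_powersetCard.2 ⟨hBsub, hBcard⟩)
    exact le_trans (Nat.succ_le_succ (Nat.zero_le _)) h2
  have hsupwit : ∀ A : Finset (Fin n), 1 ≤ msup A →
      ∃ S, S ⊆ A ∧ S.card = k ∧ (c S).val + 1 = msup A := by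
    intro A hA
    rw [hmsupA] at hA ⊢
    have hne : (Finset.powersetCard k A).Nonempty := by
      by_contra h
      rw [Finset.not_nonempty_iff_eq_empty] at h
      rw [h] at hA
      simp only [Finset.sup_empty] at hA
      exact absurd hA (by decide)
    obtain ⟨S, hS, heq⟩ := Finset.exists_mem_eq_sup _ hne (fun S => (c S).val + 1)
    rw [Finset.mem_powersetCard] at hS
    exact ⟨S, hS.1, hS.2, heq.symm⟩
  obtain ⟨Mp, hMpx⟩ : ∃ f : SV n → ℕ, ∀ x, f x = msup (Pst x) := ⟨_, fun _ => rfl⟩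
  obtain ⟨Mn, hMnx⟩ : ∃ f : SV n → ℕ, ∀ x, f x = msup (Nst x) := ⟨_, fun _ => rfl⟩
  -- support decomposition
  have hsplit : ∀ x : SV n, (supp x).card = (Pst x).card + (Nst x).card := by
    intro x
    have hU : supp x = Pst x ∪ Nst x := by
      ext i
      simp only [mem_supp, hPst, hNst, Finset.mem_union, Finset.mem_filter,
        Finset.mem_univ, true_and]
      cases (x i) <;> simp
    have hd : Disjoint (Pst x) (Nst x) := by
      rw [Finset.disjoint_left]
      intro i hi1 hi2
      simp only [hPst, hNst, Finset.mem_filter, Finset.mem_univ, true_and] at hi1 hi2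
      rw [hi1] at hi2
      exact absurd hi2 (by decide)
    rw [hU, Finset.card_union_of_disjoint hd]
  have hPneg : ∀ x : SV n, Pst (-x) = Nst x := by
    intro x
    ext i
    simp only [hPst, hNst, Finset.mem_filter, Finset.mem_univ, true_and, neg_apply]
    cases (x i) <;> simp <;> decide
  have hNneg : ∀ x : SV n, Nst (-x) = Pst x := by
    intro x
    ext i
    simp only [hPst, hNst, Finset.mem_filter, Finset.mem_univ, true_and, neg_apply]
    cases (x i) <;> simp <;> decide
  have hPsub : ∀ x y : SV n, sle x y → Pst x ⊆ Pst y := by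
    intro x y h i hi
    simp only [hPst, Finset.mem_filter, Finset.mem_univ, true_and] at hi ⊢
    rw [h i (by rw [hi]; exact (by decide))]
    exact hi
  have hNsub : ∀ x y : SV n, sle x y → Nst x ⊆ Nst y := by
    intro x y h i hi
    simp only [hNst, Finset.mem_filter, Finset.mem_univ, true_and] at hi ⊢
    rw [h i (by rw [hi]; exact (by decide))]
    exact hi
  have hPNdisj : ∀ y : SV n, Disjoint (Pst y) (Nst y) := by
    intro y
    rw [Finset.disjoint_left]
    intro i hi1 hi2
    simp only [hPst, hNst, Finset.mem_filter, Finset.mem_univ, true_and] at hi1 hi2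
    rw [hi1] at hi2
    exact absurd hi2 (by decide)
  -- THE clash lemmas
  have clash : ∀ x y : SV n, sle x y → 1 ≤ Mp x → Mp x = Mn y → False := by
    intro x y hxy h1 heq
    rw [hMpx] at h1 heq
    rw [hMnx] at heq
    obtain ⟨S, hSsub, hScard, hSval⟩ := hsupwit (Pst x) h1
    obtain ⟨T, hTsub, hTcard, hTval⟩ := hsupwit (Nst y) (by omega)
    have hST : Disjoint S T := by
      apply Finset.disjoint_of_subset_left (hSsub.trans (hPsub x y hxy))
      exact Finset.disjoint_of_subset_right hTsub (hPNdisj y)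
    apply hcol S T hScard hTcard hST
    apply Fin.ext
    omega
  have clash' : ∀ x y : SV n, sle x y → 1 ≤ Mn x → Mn x = Mp y → False := by
    intro x y hxy h1 heq
    rw [hMnx] at h1 heq
    rw [hMpx] at heq
    obtain ⟨S, hSsub, hScard, hSval⟩ := hsupwit (Nst x) h1
    obtain ⟨T, hTsub, hTcard, hTval⟩ := hsupwit (Pst y) (by omega)
    have hST : Disjoint T S := by
      apply Finset.disjoint_of_subset_left hTsub
      exact Finset.disjoint_of_subset_right (hSsub.trans (hNsub x y hxy)) (hPNdisj y)
    apply hcol T S hTcard hScard hST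
    apply Fin.ext
    omega
  -- in the large case one of the sides reaches k
  have hlarge1 : ∀ x : SV n, K < (supp x).card → 1 ≤ Mp x ∨ 1 ≤ Mn x := by
    intro x hcard
    have hs := hsplit x
    have hsk : k ≤ (Pst x).card ∨ k ≤ (Nst x).card := by omega
    rcases hsk with h | h
    · left; rw [hMpx]; exact hsup1 _ h
    · right; rw [hMnx]; exact hsup1 _ h
  have hlargene : ∀ x : SV n, K < (supp x).card → Mp x ≠ Mn x := by
    intro x hcard heq
    have h1 : 1 ≤ Mp x := by rcases hlarge1 x hcard with h | h; exact h; omega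
    exact clash x x (sle_refl x) h1 heq
  -- the labelling
  obtain ⟨ℓ, hℓ⟩ : ∃ f : SV n → ℤ, ∀ x, f x =
      (if hx : (supp x).Nonempty then
        (if (supp x).card ≤ K then
          (if x ((supp x).min' hx) = SignType.pos
            then ((supp x).card : ℤ) else -((supp x).card : ℤ))
         else (if Mn x < Mp x then ((K + Mp x : ℕ) : ℤ) else -((K + Mn x : ℕ) : ℤ)))
      else 0) := ⟨_, fun _ => rfl⟩
  have hlsmall : ∀ (x : SV n) (hx : (supp x).Nonempty), (supp x).card ≤ K →
      ℓ x = (if x ((supp x).min' hx) = SignType.pos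
        then ((supp x).card : ℤ) else -((supp x).card : ℤ)) := by
    intro x hx hc
    rw [hℓ x, dif_pos hx, if_pos hc]
  have hllarge : ∀ (x : SV n) (hx : (supp x).Nonempty), ¬ ((supp x).card ≤ K) →
      ℓ x = (if Mn x < Mp x then ((K + Mp x : ℕ) : ℤ) else -((K + Mn x : ℕ) : ℤ)) := by
    intro x hx hc
    rw [hℓ x, dif_pos hx, if_neg hc]
  -- absolute value bounds
  have habs : ∀ x : SV n, x ≠ 0 → 1 ≤ |ℓ x| ∧ |ℓ x| ≤ ((K + m : ℕ) : ℤ) := by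
    intro x hx0
    have hx := supp_nonempty hx0
    have hc1 : 1 ≤ (supp x).card := Finset.card_pos.2 hx
    by_cases hc : (supp x).card ≤ K
    · rw [hlsmall x hx hc]
      by_cases hsgn : x ((supp x).min' hx) = SignType.pos
      · rw [if_pos hsgn, abs_of_nonneg (by positivity)]
        constructor
        · exact_mod_cast hc1
        · exact_mod_cast le_trans hc (by omega)
      · rw [if_neg hsgn, abs_neg, abs_of_nonneg (by positivity)]
        constructor
        · exact_mod_cast hc1
        · exact_mod_cast le_trans hc (by omega)
    · rw [hllarge x hx hc]
      push_neg at hc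
      have h1 := hlarge1 x hc
      have hpm := hsuple (Pst x)
      have hnm := hsuple (Nst x)
      rw [← hMpx] at hpm
      rw [← hMnx] at hnm
      by_cases hcmp : Mn x < Mp x
      · rw [if_pos hcmp, abs_of_nonneg (by positivity)]
        constructor
        · exact_mod_cast by omega
        · exact_mod_cast by omega
      · rw [if_neg hcmp, abs_neg, abs_of_nonneg (by positivity)]
        constructor
        · exact_mod_cast by omega
        · exact_mod_cast by omega
  have hz : ∀ x : SV n, x ≠ 0 → ℓ x ≠ 0 := by
    intro x hx0 h
    have h2 := (habs x hx0).1
    rw [h] at h2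
    simp at h2
  -- antipodality
  have hmin_neg : ∀ (x : SV n) (hx : (supp x).Nonempty) (hx' : (supp (-x)).Nonempty),
      (supp (-x)).min' hx' = (supp x).min' hx := by
    intro x hx hx'
    congr 1
    exact supp_neg x
  have hanti : ∀ x : SV n, x ≠ 0 → ℓ (-x) = -ℓ x := by
    intro x hx0
    have hx := supp_nonempty hx0
    have hx' : (supp (-x)).Nonempty := by rw [supp_neg]; exact hx
    have hcards : (supp (-x)).card = (supp x).card := by rw [supp_neg]
    have hMpneg : Mp (-x) = Mn x := by rw [hMpx, hMnx, hPneg]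
    have hMnneg : Mn (-x) = Mp x := by rw [hMpx, hMnx, hNneg]
    by_cases hc : (supp x).card ≤ K
    · rw [hlsmall x hx hc, hlsmall (-x) hx' (by rw [hcards]; exact hc)]
      rw [hmin_neg x hx hx', hcards, neg_apply]
      have hm0 : x ((supp x).min' hx) ≠ 0 := mem_supp.1 ((supp x).min'_mem hx)
      cases hq : x ((supp x).min' hx) with
      | zero => exact absurd hq hm0
      | neg =>
        rw [if_pos (show -SignType.neg = SignType.pos by decide),
          if_neg (show ¬ (SignType.neg = SignType.pos) by decide), neg_neg]
      | pos =>
        rw [if_neg (show ¬ (-SignType.pos = SignType.pos) by decide),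
          if_pos (show SignType.pos = SignType.pos from rfl)]
    · rw [hllarge x hx hc, hllarge (-x) hx' (by rw [hcards]; exact hc)]
      push_neg at hc
      have hne := hlargene x hc
      rw [hMpneg, hMnneg]
      by_cases hcmp : Mn x < Mp x
      · rw [if_pos hcmp, if_neg (by omega)]
      · rw [if_neg hcmp, if_pos (by omega), neg_neg]
  -- no complementary edge
  have hcomp : ∀ x y : SV n, x ≠ 0 → x ≠ y → sle x y → ℓ x ≠ -ℓ y := by
    intro x y hx0 hxy hsle heq
    have hy0 : y ≠ 0 := by
      intro h
      apply hx0
      funext i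
      by_contra hi
      have h2 := hsle i hi
      rw [h] at h2
      exact hi h2.symm
    have hxne := supp_nonempty hx0
    have hyne := supp_nonempty hy0
    have habseq : |ℓ x| = |ℓ y| := by rw [heq, abs_neg]
    have hcx1 : 1 ≤ (supp x).card := Finset.card_pos.2 hxne
    have hcy1 : 1 ≤ (supp y).card := Finset.card_pos.2 hyne
    by_cases hcx : (supp x).card ≤ K <;> by_cases hcy : (supp y).card ≤ K
    · -- both small : x = y, contradiction
      have hax : |ℓ x| = ((supp x).card : ℤ) := by
        rw [hlsmall x hxne hcx]
        by_cases hsgn : x ((supp x).min' hxne) = SignType.pos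
        · rw [if_pos hsgn, abs_of_nonneg (by positivity)]
        · rw [if_neg hsgn, abs_neg, abs_of_nonneg (by positivity)]
      have hay : |ℓ y| = ((supp y).card : ℤ) := by
        rw [hlsmall y hyne hcy]
        by_cases hsgn : y ((supp y).min' hyne) = SignType.pos
        · rw [if_pos hsgn, abs_of_nonneg (by positivity)]
        · rw [if_neg hsgn, abs_neg, abs_of_nonneg (by positivity)]
      have hceq : (supp x).card = (supp y).card := by
        rw [hax, hay] at habseq
        exact_mod_cast habseq
      have hse : supp x = supp y :=
        Finset.eq_of_subset_of_card_le (supp_mono hsle) hceq.ge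
      exact hxy (eq_of_sle_of_supp_subset hsle (by rw [hse]))
    · -- x small, y large : absolute values differ
      have hax : |ℓ x| ≤ (K : ℤ) := by
        rw [hlsmall x hxne hcx]
        by_cases hsgn : x ((supp x).min' hxne) = SignType.pos
        · rw [if_pos hsgn, abs_of_nonneg (by positivity)]; exact_mod_cast hcx
        · rw [if_neg hsgn, abs_neg, abs_of_nonneg (by positivity)]; exact_mod_cast hcx
      have hay : (K : ℤ) < |ℓ y| := by
        rw [hllarge y hyne hcy]
        push_neg at hcy
        have h1 := hlarge1 y hcy
        by_cases hcmp : Mn y < Mp y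
        · rw [if_pos hcmp, abs_of_nonneg (by positivity)]
          exact_mod_cast by omega
        · rw [if_neg hcmp, abs_neg, abs_of_nonneg (by positivity)]
          exact_mod_cast by omega
      rw [habseq] at hax
      omega
    · -- x large, y small : absolute values differ
      have hay : |ℓ y| ≤ (K : ℤ) := by
        rw [hlsmall y hyne hcy]
        by_cases hsgn : y ((supp y).min' hyne) = SignType.pos
        · rw [if_pos hsgn, abs_of_nonneg (by positivity)]; exact_mod_cast hcy
        · rw [if_neg hsgn, abs_neg, abs_of_nonneg (by positivity)]; exact_mod_cast hcy
      have hax : (K : ℤ) < |ℓ x| := by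
        rw [hllarge x hxne hcx]
        push_neg at hcx
        have h1 := hlarge1 x hcx
        by_cases hcmp : Mn x < Mp x
        · rw [if_pos hcmp, abs_of_nonneg (by positivity)]
          exact_mod_cast by omega
        · rw [if_neg hcmp, abs_neg, abs_of_nonneg (by positivity)]
          exact_mod_cast by omega
      rw [habseq] at hax
      omega
    · -- both large
      push_neg at hcx hcy
      have hnex := hlargene x hcx
      have hney := hlargene y hcy
      have h1x := hlarge1 x hcx
      have h1y := hlarge1 y hcy
      rw [hllarge x hxne (by omega), hllarge y hyne (by omega)] at heq
      by_cases hx1 : Mn x < Mp x <;> by_cases hy1 : Mn y < Mp y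
      · rw [if_pos hx1, if_pos hy1] at heq
        have : (0:ℤ) < ((K + Mp x : ℕ) : ℤ) := by exact_mod_cast by omega
        have : (0:ℤ) < ((K + Mp y : ℕ) : ℤ) := by exact_mod_cast by omega
        omega
      · rw [if_pos hx1, if_neg hy1] at heq
        rw [neg_neg] at heq
        have hMM : Mp x = Mn y := by
          have : (K + Mp x : ℕ) = (K + Mn y : ℕ) := by exact_mod_cast heq
          omega
        exact clash x y hsle (by omega) hMM
      · rw [if_neg hx1, if_pos hy1] at heq
        have hMM : Mn x = Mp y := by
          have h2 : ((K + Mn x : ℕ) : ℤ) = ((K + Mp y : ℕ) : ℤ) := by omega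
          have : (K + Mn x : ℕ) = (K + Mp y : ℕ) := by exact_mod_cast h2
          omega
        exact clash' x y hsle (by omega) hMM
      · rw [if_neg hx1, if_neg hy1] at heq
        rw [neg_neg] at heq
        have : (0:ℤ) < ((K + Mn x : ℕ) : ℤ) := by exact_mod_cast by omega
        have : (0:ℤ) < ((K + Mn y : ℕ) : ℤ) := by exact_mod_cast by omega
        omega
  -- apply the Tucker lemma
  obtain ⟨ch, hchain, hccard, hAltP⟩ := octTucker ℓ hz hanti hcomp
  have hnodup : ((lab ℓ ch).map (fun a => |a|)).Nodup := AltP_nodup_abs hAltP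
  have hcards : Multiset.card ((lab ℓ ch).map (fun a => |a|)) = n := by
    rw [Multiset.card_map, lab, Multiset.card_map]
    exact hccard
  have hsubIcc : ((lab ℓ ch).map (fun a => |a|)).toFinset ⊆
      Finset.Icc (1:ℤ) ((K + m : ℕ) : ℤ) := by
    intro a ha
    rw [Multiset.mem_toFinset] at ha
    obtain ⟨b, hb, rfl⟩ := Multiset.mem_map.1 ha
    obtain ⟨x, hxc, rfl⟩ := Multiset.mem_map.1 hb
    have := habs x (hchain.1 x hxc)
    rw [Finset.mem_Icc]
    exact this
  have hn_le : n ≤ K + m := by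
    have h1 : ((lab ℓ ch).map (fun a => |a|)).toFinset.card = n := by
      rw [Multiset.toFinset_card_of_nodup hnodup, hcards]
    have h2 := Finset.card_le_card hsubIcc
    rw [h1, Int.card_Icc] at h2
    have h3 : (((K + m : ℕ) : ℤ) + 1 - 1).toNat = K + m := by
      omega
    rw [h3] at h2
    exact h2
  omega
lemma kneser_ub (n k : ℕ) (hk : 2 ≤ k) (hn : 2 * k ≤ n) :
    ∃ c : Finset (Fin n) → Fin (n - 2 * k + 2),
      ∀ S T : Finset (Fin n), S.card = k → T.card = k → Disjoint S T → c S ≠ c T := by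
  classical
  obtain ⟨B, hB⟩ : ∃ B, B = n - 2 * k + 1 := ⟨_, rfl⟩
  obtain ⟨f, hf⟩ : ∃ f : Finset (Fin n) → ℕ,
      ∀ S, f S = min (if h : S.Nonempty then ((S.min' h : Fin n) : ℕ) else 0) B :=
    ⟨_, fun _ => rfl⟩
  have hfB : ∀ S, f S ≤ B := by
    intro S
    rw [hf]
    exact min_le_right _ _
  have hflt : ∀ S, f S < n - 2 * k + 2 := by
    intro S
    have := hfB S
    omega
  refine ⟨fun S => ⟨f S, hflt S⟩, ?_⟩
  intro S T hS hT hd heq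
  have hv : f S = f T := congrArg Fin.val heq
  have hSne : S.Nonempty := Finset.card_pos.1 (by omega)
  have hTne : T.Nonempty := Finset.card_pos.1 (by omega)
  have hfS : f S = min ((S.min' hSne : Fin n) : ℕ) B := by rw [hf, dif_pos hSne]
  have hfT : f T = min ((T.min' hTne : Fin n) : ℕ) B := by rw [hf, dif_pos hTne]
  by_cases ha : ((S.min' hSne : Fin n) : ℕ) < B
  · have h1 : f S = ((S.min' hSne : Fin n) : ℕ) := by rw [hfS]; omega
    by_cases hb : ((T.min' hTne : Fin n) : ℕ) < B
    · have h2 : f T = ((T.min' hTne : Fin n) : ℕ) := by rw [hfT]; omega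
      have hmm : (S.min' hSne : Fin n) = (T.min' hTne : Fin n) := by
        apply Fin.ext
        omega
      have hmem1 := S.min'_mem hSne
      have hmem2 := T.min'_mem hTne
      rw [hmm] at hmem1
      exact (Finset.disjoint_left.1 hd) hmem1 hmem2
    · have h2 : f T = B := by rw [hfT]; omega
      omega
  · have h1 : f S = B := by rw [hfS]; omega
    have hb : ¬ ((T.min' hTne : Fin n) : ℕ) < B := by
      intro hb
      have h2 : f T = ((T.min' hTne : Fin n) : ℕ) := by rw [hfT]; omega
      omega
    -- all elements of S and T are ≥ B
    have hSbig : ∀ i ∈ S, B ≤ (i : ℕ) := by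
      intro i hi
      have := S.min'_le i hi
      omega
    have hTbig : ∀ i ∈ T, B ≤ (i : ℕ) := by
      intro i hi
      have := T.min'_le i hi
      omega
    have hsub : S ∪ T ⊆ Finset.univ.filter (fun i : Fin n => B ≤ (i : ℕ)) := by
      intro i hi
      simp only [Finset.mem_filter, Finset.mem_univ, true_and]
      rcases Finset.mem_union.1 hi with h | h
      · exact hSbig i h
      · exact hTbig i h
    have hcardU : (S ∪ T).card = 2 * k := by
      rw [Finset.card_union_of_disjoint hd, hS, hT]
      omega
    have hcardF : (Finset.univ.filter (fun i : Fin n => B ≤ (i : ℕ))).card = n - B := by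
      have hsumc := Finset.card_filter_add_card_filter_not
        (s := (Finset.univ : Finset (Fin n))) (p := fun i : Fin n => (i : ℕ) < B)
      have h1 : (Finset.univ.filter (fun i : Fin n => (i : ℕ) < B)).card = B :=
        card_filterLT (by omega)
      have h2 : (Finset.univ.filter (fun i : Fin n => ¬ ((i : ℕ) < B))).card
          = (Finset.univ.filter (fun i : Fin n => B ≤ (i : ℕ))).card := by
        apply congrArg Finset.card
        apply Finset.filter_congr
        intro i _
        simp [not_lt]
      rw [Finset.card_univ, Fintype.card_fin] at hsumc
      omega
    have := Finset.card_le_card hsub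
    rw [hcardU, hcardF] at this
    omega

theorem kneser_final (n k : ℕ) (hk : 2 ≤ k) (hn : 2 * k ≤ n) :
    sInf {m : ℕ | ∃ c : Finset (Fin n) → Fin m,
        ∀ S T : Finset (Fin n), S.card = k → T.card = k → Disjoint S T →
          c S ≠ c T} = n - 2 * k + 2 := by
  have hub := kneser_ub n k hk hn
  have hmem : (n - 2 * k + 2) ∈ {m : ℕ | ∃ c : Finset (Fin n) → Fin m,
      ∀ S T : Finset (Fin n), S.card = k → T.card = k → Disjoint S T → c S ≠ c T} := hub
  apply le_antisymm
  · exact Nat.sInf_le hmem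
  · refine le_csInf ⟨_, hmem⟩ ?_
    rintro m ⟨c, hc⟩
    exact kneser_lb n k m hk hn c hc
end KG

/-- **Kneser's conjecture (Lovász's theorem).** For `n ≥ 2k ≥ 4`, the chromatic
number of the Kneser graph on the `k`-subsets of `[n]` (adjacency = disjointness)
equals `n - 2k + 2`. The chromatic number is encoded as the least `m` for which a
coloring `c` of the `k`-subsets with `m` colors gives distinct colors to disjoint
`k`-subsets. -/
theorem kneser_conjecture (n k : ℕ) (hk : 2 ≤ k) (hn : 2 * k ≤ n) :
    sInf {m : ℕ | ∃ c : Finset (Fin n) → Fin m,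
        ∀ S T : Finset (Fin n), S.card = k → T.card = k → Disjoint S T →
          c S ≠ c T} = n - 2 * k + 2 := KG.kneser_final n k hk hn
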